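/- arXiv:2310.14830 — 10 statements merged into one kernel-verified Lean document; each statement's English description precedes it below -/
import Mathlib

section
/- For each integer j with 2 ≤ j ≤ n−1 there exist constants 0 < C₁ ≤ C₂ (depending only on n and j) such that C₁·⟨x, y⟩ ≤ σ_j(x,y) ≤ C₂·⟨x, y⟩ for all x, y in the closed Weyl chamber C̄. -/
open Real Finset

noncomputable section

/-- The Euclidean inner product on `ℝ × ℝ`. -/
def dot2 (x y : ℝ × ℝ) : ℝ := x.1 * y.1 + x.2 * y.2

/-- The positive root `α_j = (cos (πj/n), sin (πj/n))` of the dihedral system `I_n`. -/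
def alphaRoot (n : ℕ) (j : ℤ) : ℝ × ℝ :=
  (Real.cos (Real.pi * j / n), Real.sin (Real.pi * j / n))

/-- The rotation `r_j` of `ℝ²` about the origin by angle `2πj/n`. -/
def rotMap (n : ℕ) (j : ℤ) (v : ℝ × ℝ) : ℝ × ℝ :=
  (Real.cos (2 * Real.pi * j / n) * v.1 - Real.sin (2 * Real.pi * j / n) * v.2,
   Real.sin (2 * Real.pi * j / n) * v.1 + Real.cos (2 * Real.pi * j / n) * v.2)

/-- The reflection `s_j` of `ℝ²`, with matrix
`[[−cos(2πj/n), sin(2πj/n)], [sin(2πj/n), cos(2πj/n)]]`. -/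
def reflMap (n : ℕ) (j : ℤ) (v : ℝ × ℝ) : ℝ × ℝ :=
  (-Real.cos (2 * Real.pi * j / n) * v.1 + Real.sin (2 * Real.pi * j / n) * v.2,
   Real.sin (2 * Real.pi * j / n) * v.1 + Real.cos (2 * Real.pi * j / n) * v.2)

/-- `ρ_j(x,y) = ⟨x, y − r_j.y⟩`. -/
def rhoJ (n : ℕ) (j : ℤ) (x y : ℝ × ℝ) : ℝ := dot2 x (y - rotMap n j y)

/-- `σ_j(x,y) = ⟨x, y − s_j.y⟩`. -/
def sigmaJ (n : ℕ) (j : ℤ) (x y : ℝ × ℝ) : ℝ := dot2 x (y - reflMap n j y)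

/-- The closed Weyl chamber `C̄ = {x : ⟨α_0,x⟩ ≥ 0 and ⟨α_{n−1},x⟩ ≥ 0}`. -/
def chamber (n : ℕ) : Set (ℝ × ℝ) :=
  {x | 0 ≤ dot2 (alphaRoot n 0) x ∧ 0 ≤ dot2 (alphaRoot n ((n : ℤ) - 1)) x}

/-- The rotation `r̃` about the origin by angle `π/2 − π/n`. -/
def rtilde (n : ℕ) (v : ℝ × ℝ) : ℝ × ℝ :=
  (Real.sin (Real.pi / n) * v.1 - Real.cos (Real.pi / n) * v.2,
   Real.cos (Real.pi / n) * v.1 + Real.sin (Real.pi / n) * v.2)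

/-- Auxiliary: cosine on `[b, 2π − b]` is at most `cos b`. -/
lemma cosLeAux {a b : ℝ} (hb0 : 0 ≤ b) (hbpi : b ≤ Real.pi) (h1 : b ≤ a)
    (h2 : a ≤ 2 * Real.pi - b) : Real.cos a ≤ Real.cos b := by
  rcases le_total a Real.pi with h | h
  · exact Real.cos_le_cos_of_nonneg_of_le_pi hb0 h h1
  · have e : Real.cos a = Real.cos (2 * Real.pi - a) := by
      rw [show 2 * Real.pi - a = -(a - 2 * Real.pi) by ring, Real.cos_neg,
        Real.cos_sub_two_pi]
    rw [e]
    exact Real.cos_le_cos_of_nonneg_of_le_pi hb0 (by linarith) (by linarith)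

set_option maxHeartbeats 1000000 in
/-- For each `2 ≤ j ≤ n−1` there are constants `0 < C₁ ≤ C₂` (depending only on `n` and `j`)
such that `C₁⟨x,y⟩ ≤ σ_j(x,y) ≤ C₂⟨x,y⟩` on the closed Weyl chamber. -/
theorem sigma_comparable_inner (n : ℕ) (hn : 3 ≤ n) (j : ℕ) (hj2 : 2 ≤ j) (hjn : j ≤ n - 1) :
    ∃ C₁ C₂ : ℝ, 0 < C₁ ∧ C₁ ≤ C₂ ∧
      ∀ x ∈ chamber n, ∀ y ∈ chamber n,
        C₁ * dot2 x y ≤ sigmaJ n j x y ∧ sigmaJ n j x y ≤ C₂ * dot2 x y := by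
  have hπ := Real.pi_pos
  have hn0 : (0:ℝ) < n := by positivity
  set p : ℝ := Real.pi / n with hp_def
  have hp0 : 0 < p := div_pos hπ hn0
  have hnp : (n:ℝ) * p = Real.pi := by rw [hp_def]; field_simp
  have hnR : (3:ℝ) ≤ n := by exact_mod_cast hn
  have hjR : (2:ℝ) ≤ j := by exact_mod_cast hj2
  have hjnR : (j:ℝ) + 1 ≤ n := by
    have : j + 1 ≤ n := by omega
    exact_mod_cast this
  have h2ppi : 2 * p ≤ Real.pi := by nlinarith
  have hp_pi2 : p < Real.pi / 2 := by nlinarith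
  have hc : 0 < Real.cos p := Real.cos_pos_of_mem_Ioo ⟨by linarith, hp_pi2⟩
  have hs : 0 < Real.sin p := Real.sin_pos_of_pos_of_lt_pi hp0 (by linarith)
  have hc1 : Real.cos p ≤ 1 := Real.cos_le_one p
  have hlt : Real.cos (2 * p) < Real.cos p :=
    Real.cos_lt_cos_of_nonneg_of_le_pi (le_of_lt hp0) h2ppi (by linarith)
  have hsc : Real.sin p ^ 2 + Real.cos p ^ 2 = 1 := Real.sin_sq_add_cos_sq p
  set T : ℝ := 2 * Real.pi * (j:ℝ) / n with hT_def
  have hTj : T = 2 * (j:ℝ) * p := by rw [hT_def, hp_def]; ring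
  have hj2p : 0 ≤ ((j:ℝ) - 2) * p := mul_nonneg (by linarith) hp0.le
  have hjn_p : 0 ≤ ((n:ℝ) - 1 - (j:ℝ)) * p := mul_nonneg (by linarith) hp0.le
  have hA : Real.cos (T - 2 * p) ≤ Real.cos (2 * p) :=
    cosLeAux (by positivity) h2ppi (by nlinarith) (by nlinarith)
  have hB : Real.cos (T - p) ≤ Real.cos (2 * p) :=
    cosLeAux (by positivity) h2ppi (by nlinarith) (by nlinarith)
  have hC : Real.cos T ≤ Real.cos (2 * p) :=
    cosLeAux (by positivity) h2ppi (by nlinarith) (by nlinarith)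
  -- σ in coordinates
  have hsig : ∀ x y : ℝ × ℝ, sigmaJ n j x y =
      (1 + Real.cos T) * x.1 * y.1 - Real.sin T * (x.1 * y.2) - Real.sin T * (x.2 * y.1)
        + (1 - Real.cos T) * x.2 * y.2 := by
    intro x y
    simp only [sigmaJ, dot2, reflMap, Prod.fst_sub, Prod.snd_sub]
    rw [hT_def]
    push_cast
    ring
  -- chamber in coordinates
  have hcham : ∀ z : ℝ × ℝ, z ∈ chamber n →
      0 ≤ z.1 ∧ 0 ≤ Real.sin p * z.2 - Real.cos p * z.1 := by
    intro z hz
    obtain ⟨h1, h2⟩ := hz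
    simp only [alphaRoot, dot2] at h1 h2
    norm_num at h1
    have hang : Real.pi * (((n:ℤ) - 1 : ℤ) : ℝ) / n = Real.pi - p := by
      rw [hp_def]
      push_cast
      field_simp
    rw [hang, Real.cos_pi_sub, Real.sin_pi_sub] at h2
    exact ⟨h1, by linarith⟩
  refine ⟨Real.cos p - Real.cos (2 * p), 2 / Real.cos p, by linarith, ?_, ?_⟩
  · rw [le_div_iff₀ hc]
    nlinarith [Real.neg_one_le_cos (2 * p)]
  intro x hx y hy
  obtain ⟨hx1, hxB⟩ := hcham x hx
  obtain ⟨hy1, hyB⟩ := hcham y hy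
  have hs2 : (0:ℝ) < Real.sin p ^ 2 := by positivity
  have hmid : 0 ≤ x.1 * (Real.sin p * y.2 - Real.cos p * y.1)
      + (Real.sin p * x.2 - Real.cos p * x.1) * y.1 :=
    add_nonneg (mul_nonneg hx1 hyB) (mul_nonneg hxB hy1)
  have hxy1 : 0 ≤ x.1 * y.1 := mul_nonneg hx1 hy1
  have hBB : 0 ≤ (Real.sin p * x.2 - Real.cos p * x.1) * (Real.sin p * y.2 - Real.cos p * y.1) :=
    mul_nonneg hxB hyB
  constructor
  · -- lower bound
    have key : Real.sin p ^ 2 * (sigmaJ n j x y - (Real.cos p - Real.cos (2 * p)) * dot2 x y)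
        = x.1 * y.1 * ((1 - Real.cos (T - 2 * p)) - (Real.cos p - Real.cos (2 * p)))
        + (x.1 * (Real.sin p * y.2 - Real.cos p * y.1)
            + (Real.sin p * x.2 - Real.cos p * x.1) * y.1)
            * ((Real.cos p - Real.cos (T - p)) - (Real.cos p - Real.cos (2 * p)) * Real.cos p)
        + (Real.sin p * x.2 - Real.cos p * x.1) * (Real.sin p * y.2 - Real.cos p * y.1)
            * ((1 - Real.cos T) - (Real.cos p - Real.cos (2 * p))) := by
      rw [hsig x y]
      simp only [dot2, Real.cos_sub, Real.cos_two_mul, Real.sin_two_mul]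
      linear_combination (x.1 * y.1 * (Real.cos T + 2 * Real.cos p ^ 2 - Real.cos p)) * hsc
    have T1 : 0 ≤ (1 - Real.cos (T - 2 * p)) - (Real.cos p - Real.cos (2 * p)) := by linarith
    have T2 : 0 ≤ (Real.cos p - Real.cos (T - p))
        - (Real.cos p - Real.cos (2 * p)) * Real.cos p := by
      nlinarith [mul_nonneg (sub_nonneg.2 hlt.le) (sub_nonneg.2 hc1)]
    have T3 : 0 ≤ (1 - Real.cos T) - (Real.cos p - Real.cos (2 * p)) := by linarith
    have hR : 0 ≤ Real.sin p ^ 2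
        * (sigmaJ n j x y - (Real.cos p - Real.cos (2 * p)) * dot2 x y) := by
      rw [key]
      have := add_nonneg (add_nonneg (mul_nonneg hxy1 T1) (mul_nonneg hmid T2))
        (mul_nonneg hBB T3)
      linarith
    have := (mul_nonneg_iff_of_pos_left hs2).mp hR
    linarith
  · -- upper bound
    set K2 : ℝ := 2 / Real.cos p with hK2_def
    have hK2c : K2 * Real.cos p = 2 := by rw [hK2_def]; field_simp
    have hK2 : 2 ≤ K2 := by rw [hK2_def, le_div_iff₀ hc]; nlinarith
    have key : Real.sin p ^ 2 * (K2 * dot2 x y - sigmaJ n j x y)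
        = x.1 * y.1 * (K2 - (1 - Real.cos (T - 2 * p)))
        + (x.1 * (Real.sin p * y.2 - Real.cos p * y.1)
            + (Real.sin p * x.2 - Real.cos p * x.1) * y.1)
            * (K2 * Real.cos p - (Real.cos p - Real.cos (T - p)))
        + (Real.sin p * x.2 - Real.cos p * x.1) * (Real.sin p * y.2 - Real.cos p * y.1)
            * (K2 - (1 - Real.cos T)) := by
      rw [hsig x y]
      simp only [dot2, Real.cos_sub, Real.cos_two_mul, Real.sin_two_mul]
      linear_combination (x.1 * y.1 * (K2 - 1 - Real.cos T)) * hsc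
    have U1 : 0 ≤ K2 - (1 - Real.cos (T - 2 * p)) := by
      linarith [Real.neg_one_le_cos (T - 2 * p)]
    have U2 : 0 ≤ K2 * Real.cos p - (Real.cos p - Real.cos (T - p)) := by
      linarith [Real.neg_one_le_cos (T - p), hK2c]
    have U3 : 0 ≤ K2 - (1 - Real.cos T) := by linarith [Real.neg_one_le_cos T]
    have hR : 0 ≤ Real.sin p ^ 2 * (K2 * dot2 x y - sigmaJ n j x y) := by
      rw [key]
      have := add_nonneg (add_nonneg (mul_nonneg hxy1 U1) (mul_nonneg hmid U2))
        (mul_nonneg hBB U3)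
      linarith
    have := (mul_nonneg_iff_of_pos_left hs2).mp hR
    linarith
end
end

section
/- For each integer j with 2 ≤ j ≤ n−2 there exist constants 0 < C₁ ≤ C₂ (depending only on n and j) such that C₁·⟨x, y⟩ ≤ ρ_j(x,y) ≤ C₂·⟨x, y⟩ for all x, y in the closed Weyl chamber C̄. -/
open Real Finset

noncomputable section

lemma cos_lt_cos_aux {a θ : ℝ} (ha : 0 < a) (h1 : a < θ) (h2 : θ < 2 * π - a) :
    Real.cos θ < Real.cos a := by
  rcases le_or_gt θ π with hθ | hθ
  · exact Real.cos_lt_cos_of_nonneg_of_le_pi ha.le hθ h1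
  · have he : Real.cos θ = Real.cos (2 * π - θ) := by
      rw [Real.cos_sub]
      simp [Real.cos_two_pi, Real.sin_two_pi]
    rw [he]
    exact Real.cos_lt_cos_of_nonneg_of_le_pi ha.le (by linarith) (by linarith)

lemma rho_eq (n : ℕ) (j : ℕ) (x y : ℝ × ℝ) :
    rhoJ n (j : ℤ) x y =
      (1 - Real.cos (2 * π * j / n)) * (x.1 * y.1 + x.2 * y.2) +
        Real.sin (2 * π * j / n) * (x.1 * y.2 - x.2 * y.1) := by
  simp only [rhoJ, dot2, rotMap, Prod.fst_sub, Prod.snd_sub, Int.cast_natCast]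
  ring

lemma chamber_coords {n : ℕ} (hn : 3 ≤ n) {x : ℝ × ℝ} (hx : x ∈ chamber n) :
    0 ≤ x.1 ∧ 0 ≤ x.2 ∧ Real.cos (π / n) * x.1 ≤ Real.sin (π / n) * x.2 := by
  obtain ⟨h1, h2⟩ := hx
  have hn0 : (n : ℝ) ≠ 0 := Nat.cast_ne_zero.mpr (by omega)
  simp only [dot2, alphaRoot, Int.cast_zero, mul_zero, zero_div, Real.cos_zero,
    Real.sin_zero, one_mul, zero_mul, add_zero] at h1
  simp only [dot2, alphaRoot] at h2
  push_cast at h2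
  have harg : Real.pi * ((n : ℝ) - 1) / n = π - π / n := by
    field_simp
  rw [harg, Real.cos_pi_sub, Real.sin_pi_sub] at h2
  have hπn : 0 < π / n := by positivity
  have hπn2 : π / n < π / 2 := by
    apply div_lt_div_of_pos_left Real.pi_pos (by norm_num)
    exact_mod_cast by omega
  have hs : 0 < Real.sin (π / n) :=
    Real.sin_pos_of_pos_of_lt_pi hπn (by linarith [Real.pi_pos])
  have hc : 0 < Real.cos (π / n) := Real.cos_pos_of_mem_Ioo ⟨by linarith, hπn2⟩
  refine ⟨h1, ?_, by linarith⟩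
  nlinarith


/-- For each `2 ≤ j ≤ n−2` there are constants `0 < C₁ ≤ C₂` (depending only on `n` and `j`)
such that `C₁⟨x,y⟩ ≤ ρ_j(x,y) ≤ C₂⟨x,y⟩` on the closed Weyl chamber. -/
theorem rho_comparable_inner (n : ℕ) (hn : 3 ≤ n) (j : ℕ) (hj2 : 2 ≤ j) (hjn : j ≤ n - 2) :
    ∃ C₁ C₂ : ℝ, 0 < C₁ ∧ C₁ ≤ C₂ ∧
      ∀ x ∈ chamber n, ∀ y ∈ chamber n,
        C₁ * dot2 x y ≤ rhoJ n j x y ∧ rhoJ n j x y ≤ C₂ * dot2 x y := by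
  have hn0 : (0 : ℝ) < n := by exact_mod_cast by omega
  have hπ := Real.pi_pos
  have hπn : 0 < π / n := by positivity
  have hπn2 : π / n < π / 2 := by
    apply div_lt_div_of_pos_left Real.pi_pos (by norm_num)
    exact_mod_cast by omega
  set c : ℝ := Real.cos (π / n) with hcdef
  set s : ℝ := Real.sin (π / n) with hsdef
  have hs : 0 < s := Real.sin_pos_of_pos_of_lt_pi hπn (by linarith)
  have hc : 0 < c := Real.cos_pos_of_mem_Ioo ⟨by linarith, hπn2⟩
  set φ : ℝ := 2 * π * j / n with hφdef
  have hj2' : (2 : ℝ) ≤ j := by exact_mod_cast hj2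
  have hjn' : (j : ℝ) ≤ (n : ℝ) - 2 := by
    have : j + 2 ≤ n := by omega
    have := (Nat.cast_le (α := ℝ)).mpr this
    push_cast at this
    linarith
  -- bounds on φ
  have hφpos : 0 < φ := by rw [hφdef]; positivity
  have hφ1 : π / n < φ - π / n := by
    have h : φ - π / n = (2 * π * j - π) / n := by rw [hφdef]; ring
    rw [h, div_lt_div_iff₀ hn0 hn0]
    nlinarith [mul_le_mul_of_nonneg_right hj2' (mul_pos hπ hn0).le, mul_pos hπ hn0]
  have hφ2 : φ - π / n < 2 * π - π / n := by
    have h : φ < 2 * π := by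
      rw [hφdef, div_lt_iff₀ hn0]
      nlinarith [mul_le_mul_of_nonneg_right hjn' hπ.le]
    linarith
  have hφ3 : φ + π / n < 2 * π - π / n := by
    have h : φ + π / n = (2 * π * j + π) / n := by rw [hφdef]; ring
    have h2 : 2 * π - π / n = (2 * π * n - π) / n := by field_simp
    rw [h, h2, div_lt_div_iff₀ hn0 hn0]
    nlinarith [mul_le_mul_of_nonneg_right hjn' (mul_pos hπ hn0).le, mul_pos hπ hn0]
  -- positivity of the numerator constant
  have hN : 0 < c * (1 - Real.cos φ) - |Real.sin φ| * s := by
    rcases le_or_gt 0 (Real.sin φ) with hsin | hsin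
    · rw [abs_of_nonneg hsin]
      have h := cos_lt_cos_aux hπn hφ1 hφ2
      rw [Real.cos_sub, ← hcdef, ← hsdef] at h
      nlinarith
    · rw [abs_of_neg hsin]
      have h := cos_lt_cos_aux hπn (by linarith) hφ3
      rw [Real.cos_add, ← hcdef, ← hsdef] at h
      nlinarith
  have habs : 0 ≤ |Real.sin φ| := abs_nonneg _
  have hcos1 : Real.cos φ ≤ 1 := Real.cos_le_one φ
  have hcos2 : -1 ≤ Real.cos φ := Real.neg_one_le_cos φ
  refine ⟨(c * (1 - Real.cos φ) - |Real.sin φ| * s) / c, (2 * c + s) / c,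
    div_pos hN hc, ?_, ?_⟩
  · rw [div_le_div_iff₀ hc hc]
    linarith only [mul_nonneg (mul_nonneg hc.le (show (0 : ℝ) ≤ 1 + Real.cos φ by linarith)) hc.le,
      mul_nonneg (mul_nonneg habs hs.le) hc.le, mul_nonneg hs.le hc.le]
  intro x hx y hy
  obtain ⟨hx1, hx2, hx3⟩ := chamber_coords hn hx
  obtain ⟨hy1, hy2, hy3⟩ := chamber_coords hn hy
  rw [← hcdef, ← hsdef] at hx3 hy3
  have hrho := rho_eq n j x y
  rw [← hφdef] at hrho
  have hD : 0 ≤ x.1 * y.1 + x.2 * y.2 :=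
    add_nonneg (mul_nonneg hx1 hy1) (mul_nonneg hx2 hy2)
  have hK1 : c * (x.1 * y.2 - x.2 * y.1) ≤ s * (x.1 * y.1 + x.2 * y.2) := by
    linarith only [mul_nonneg hy1 (add_nonneg (mul_nonneg hs.le hx1) (mul_nonneg hc.le hx2)),
      mul_nonneg hy2 (sub_nonneg.mpr hx3)]
  have hK2 : -(s * (x.1 * y.1 + x.2 * y.2)) ≤ c * (x.1 * y.2 - x.2 * y.1) := by
    linarith only [mul_nonneg hx1 (add_nonneg (mul_nonneg hs.le hy1) (mul_nonneg hc.le hy2)),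
      mul_nonneg hx2 (sub_nonneg.mpr hy3)]
  have hdot : dot2 x y = x.1 * y.1 + x.2 * y.2 := rfl
  rw [hdot, hrho]
  constructor
  · rw [div_mul_eq_mul_div, div_le_iff₀ hc]
    rcases le_or_gt 0 (Real.sin φ) with hsin | hsin
    · rw [abs_of_nonneg hsin]
      linarith only [mul_nonneg hsin
        (show (0 : ℝ) ≤ s * (x.1 * y.1 + x.2 * y.2) + c * (x.1 * y.2 - x.2 * y.1) by linarith)]
    · rw [abs_of_neg hsin]
      linarith only [mul_nonneg (show (0 : ℝ) ≤ -Real.sin φ by linarith)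
        (sub_nonneg.mpr hK1)]
  · rw [div_mul_eq_mul_div, le_div_iff₀ hc]
    have hcD : 0 ≤ (1 + Real.cos φ) * c * (x.1 * y.1 + x.2 * y.2) :=
      mul_nonneg (mul_nonneg (by linarith) hc.le) hD
    rcases le_or_gt 0 (Real.sin φ) with hsin | hsin
    · linarith only [hcD, mul_le_mul_of_nonneg_left hK1 hsin,
        mul_nonneg (sub_nonneg.mpr (Real.sin_le_one φ)) (mul_nonneg hs.le hD)]
    · linarith only [hcD, mul_le_mul_of_nonneg_left hK2 (show (0 : ℝ) ≤ -Real.sin φ by linarith),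
        mul_nonneg (show (0 : ℝ) ≤ 1 + Real.sin φ by linarith [Real.neg_one_le_sin φ])
          (mul_nonneg hs.le hD)]
end
end

section
/- For each j ∈ ℤ/nℤ with j ≠ 0 there exists k ∈ ℤ/nℤ such that ρ_j(x,y) ≥ σ_k(x,y) for all x, y in the closed Weyl chamber C̄. -/
open Real Finset

noncomputable section

lemma chamber_cond (n : ℕ) (hn : 3 ≤ n) {z : ℝ × ℝ} (hz : z ∈ chamber n) :
    0 ≤ z.1 ∧ 0 ≤ Real.sin (Real.pi / n) * z.2 - Real.cos (Real.pi / n) * z.1 := by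
  have hn0 : (0:ℝ) < n := by exact_mod_cast (by omega : 0 < n)
  obtain ⟨h1, h2⟩ := hz
  simp only [dot2, alphaRoot] at h1 h2
  constructor
  · simpa using h1
  · have harg : Real.pi * (((n:ℤ) - 1 : ℤ) : ℝ) / n = Real.pi - Real.pi / n := by
      push_cast
      field_simp
    rw [harg, Real.cos_pi_sub, Real.sin_pi_sub] at h2
    linarith

/-- For each `j ∈ ℤ/nℤ`, `j ≠ 0`, there exists `k ∈ ℤ/nℤ` such that
`ρ_j(x,y) ≥ σ_k(x,y)` for all `x, y` in the closed Weyl chamber. -/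
theorem rho_ge_sigma (n : ℕ) (hn : 3 ≤ n) (j : ℕ) (hj0 : j ≠ 0) (hjn : j < n) :
    ∃ k < n, ∀ x ∈ chamber n, ∀ y ∈ chamber n, sigmaJ n k x y ≤ rhoJ n j x y := by
  have hn0 : (0:ℝ) < n := by exact_mod_cast (by omega : 0 < n)
  have hnR : (3:ℝ) ≤ n := by exact_mod_cast hn
  have hj1 : (1:ℝ) ≤ (j:ℝ) := by exact_mod_cast Nat.one_le_iff_ne_zero.mpr hj0
  have hjnR : (j:ℝ) < n := by exact_mod_cast hjn
  have hjR1 : (j:ℝ) + 1 ≤ n := by exact_mod_cast hjn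
  have hpi := Real.pi_pos
  obtain ⟨p, hp⟩ : ∃ p : ℝ, p = Real.pi / n := ⟨_, rfl⟩
  have hp0 : 0 < p := by rw [hp]; positivity
  have hpn : p * n = Real.pi := by rw [hp]; field_simp
  have hplt : p < Real.pi := by nlinarith
  have hps : 0 < Real.sin p := Real.sin_pos_of_pos_of_lt_pi hp0 hplt
  obtain ⟨θ, hθ⟩ : ∃ θ : ℝ, θ = p * (2 * j) := ⟨_, rfl⟩
  have hθ0 : 0 ≤ θ := by rw [hθ]; positivity
  have hθval : 2 * Real.pi * (((j:ℤ)):ℝ) / n = θ := by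
    push_cast
    rw [hθ, hp]; ring
  rcases le_or_gt (2 * j) n with hle | hgt
  · -- k = j
    have hleR : 2 * (j:ℝ) ≤ n := by exact_mod_cast hle
    refine ⟨j, hjn, fun x hx y hy => ?_⟩
    obtain ⟨hx1, _⟩ := chamber_cond n hn hx
    obtain ⟨hy1, hy2⟩ := chamber_cond n hn hy
    rw [← hp] at hy2
    clear hx hy
    have hsθ : 0 ≤ Real.sin θ := by
      apply Real.sin_nonneg_of_nonneg_of_le_pi hθ0
      rw [hθ]; nlinarith
    have hsθp : 0 ≤ Real.sin (θ - p) := by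
      apply Real.sin_nonneg_of_nonneg_of_le_pi
      · rw [hθ]; nlinarith
      · rw [hθ]; nlinarith
    have hid : Real.sin p * (Real.sin θ * y.2 - Real.cos θ * y.1)
        = Real.sin (θ - p) * y.1 + Real.sin θ * (Real.sin p * y.2 - Real.cos p * y.1) := by
      rw [Real.sin_sub]; ring
    have hy' : 0 ≤ Real.sin θ * y.2 - Real.cos θ * y.1 := by
      have h2 : 0 ≤ Real.sin p * (Real.sin θ * y.2 - Real.cos θ * y.1) := by
        rw [hid]
        have t1 := mul_nonneg hsθp hy1
        have t2 := mul_nonneg hsθ hy2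
        linarith
      have h3 := div_nonneg h2 hps.le
      rwa [mul_div_cancel_left₀ _ (ne_of_gt hps)] at h3
    have key : rhoJ n j x y - sigmaJ n j x y
        = 2 * x.1 * (Real.sin θ * y.2 - Real.cos θ * y.1) := by
      simp only [rhoJ, sigmaJ, dot2, rotMap, reflMap, Prod.fst_sub, Prod.snd_sub, hθval]
      ring
    linarith [key, mul_nonneg hx1 hy']
  · -- k = n - j
    have hgtR : (n:ℝ) < 2 * j := by exact_mod_cast hgt
    refine ⟨n - j, by omega, fun x hx y hy => ?_⟩
    obtain ⟨hx1, hx2⟩ := chamber_cond n hn hx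
    obtain ⟨hy1, _⟩ := chamber_cond n hn hy
    rw [← hp] at hx2
    clear hx hy
    have hprod1 : 0 ≤ p * (2 * (j:ℝ) - n) :=
      mul_nonneg hp0.le (by linarith)
    have hprod2 : p * (2 * (j:ℝ)) ≤ p * ((n:ℝ) + (n:ℝ)) :=
      mul_le_mul_of_nonneg_left (by linarith) hp0.le
    have hprod3 : p * (2 * (j:ℝ)) ≤ p * ((n:ℝ) + (n:ℝ) - 2) :=
      mul_le_mul_of_nonneg_left (by linarith) hp0.le
    have hsθ : Real.sin θ ≤ 0 := by
      have h1 : 0 ≤ Real.sin (θ - Real.pi) := by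
        apply Real.sin_nonneg_of_nonneg_of_le_pi
        · rw [hθ, ← hpn]; linarith [hprod1]
        · rw [hθ, ← hpn]; linarith [hprod2]
      rw [Real.sin_sub_pi] at h1
      linarith
    have hsθp : Real.sin (θ + p) ≤ 0 := by
      have h1 : 0 ≤ Real.sin (θ + p - Real.pi) := by
        apply Real.sin_nonneg_of_nonneg_of_le_pi
        · rw [hθ, ← hpn]; linarith [hprod1, hp0]
        · rw [hθ, ← hpn]; linarith [hprod3, hp0]
      rw [Real.sin_sub_pi] at h1
      linarith
    have hid : Real.sin p * (-Real.cos θ * x.1 - Real.sin θ * x.2)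
        = -Real.sin (θ + p) * x.1 + (-Real.sin θ) * (Real.sin p * x.2 - Real.cos p * x.1) := by
      rw [Real.sin_add]; ring
    have hx' : 0 ≤ -Real.cos θ * x.1 - Real.sin θ * x.2 := by
      have h2 : 0 ≤ Real.sin p * (-Real.cos θ * x.1 - Real.sin θ * x.2) := by
        rw [hid]
        have t1 := mul_nonneg (neg_nonneg.mpr hsθp) hx1
        have t2 := mul_nonneg (neg_nonneg.mpr hsθ) hx2
        linarith
      have h3 := div_nonneg h2 hps.le
      rwa [mul_div_cancel_left₀ _ (ne_of_gt hps)] at h3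
    have harg : 2 * Real.pi * ((((n - j : ℕ) : ℤ)):ℝ) / n = 2 * Real.pi - θ := by
      push_cast [Nat.cast_sub hjn.le]
      rw [hθ, ← hpn]
      field_simp
    have hc : Real.cos (2 * Real.pi * ((((n - j : ℕ) : ℤ)):ℝ) / n) = Real.cos θ := by
      rw [harg, Real.cos_sub, Real.cos_two_pi, Real.sin_two_pi]; ring
    have hs : Real.sin (2 * Real.pi * ((((n - j : ℕ) : ℤ)):ℝ) / n) = -Real.sin θ := by
      rw [harg, Real.sin_sub, Real.cos_two_pi, Real.sin_two_pi]; ring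
    have key : rhoJ n j x y - sigmaJ n ((n - j : ℕ) : ℤ) x y
        = 2 * y.1 * (-Real.cos θ * x.1 - Real.sin θ * x.2) := by
      simp only [rhoJ, sigmaJ, dot2, rotMap, reflMap, Prod.fst_sub, Prod.snd_sub, hθval, hc, hs]
      ring
    linarith [key, mul_nonneg hy1 hx']
end
end

section
/- For every integer k with 0 ≤ k ≤ n−1 and all x, y ∈ ℝ², the elementary symmetric polynomial of degree k satisfies e_k(⟨x, r_0.y⟩, ⟨x, r_1.y⟩, …, ⟨x, r_{n−1}.y⟩) = e_k(⟨x, s_0.y⟩, ⟨x, s_1.y⟩, …, ⟨x, s_{n−1}.y⟩). -/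
open Real Finset

noncomputable section

/-- The elementary symmetric polynomial of degree `k` of the `n` numbers `f 0, …, f (n−1)`:
`e_0 = 1` and `e_k = ∑_{j_1 < … < j_k} f j_1 ⋯ f j_k`. -/
def esymmR (n k : ℕ) (f : ℕ → ℝ) : ℝ :=
  ∑ A ∈ (Finset.range n).powersetCard k, ∏ j ∈ A, f j


/-- Geometric sum of a nontrivial `n`-th root of unity vanishes. -/
lemma aux_geom_zero (n : ℕ) (hn : 0 < n) (d : ℤ) (hd : d ≠ 0) (hdn : d.natAbs < n) :
    ∑ j ∈ Finset.range n, (Complex.exp (2 * Real.pi * Complex.I / n) ^ d) ^ j = 0 := by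
  set ζ : ℂ := Complex.exp (2 * Real.pi * Complex.I / n) with hζ
  have hprim : IsPrimitiveRoot ζ n := Complex.isPrimitiveRoot_exp n hn.ne'
  have h1 : ζ ^ d ≠ 1 := by
    intro h
    have hdvd : (n : ℤ) ∣ d := (hprim.zpow_eq_one_iff_dvd d).mp h
    have : n ∣ d.natAbs := by
      simpa using Int.natAbs_dvd_natAbs.mpr hdvd
    have h0 : d.natAbs ≠ 0 := by
      simpa [Int.natAbs_eq_zero] using hd
    exact absurd (Nat.le_of_dvd (Nat.pos_of_ne_zero h0) this) (by omega)
  have h2 : (ζ ^ d) ^ n = 1 := by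
    have hζn : ζ ^ (n : ℤ) = 1 := by
      rw [zpow_natCast]; exact hprim.pow_eq_one
    rw [← zpow_natCast (ζ ^ d) n, ← zpow_mul, mul_comm, zpow_mul, hζn, one_zpow]
  rw [geom_sum_eq h1, h2]
  simp

/-- Power sums of the sequence `j ↦ P cos(2πj/n) + Q sin(2πj/n)`, for exponent `m < n`,
depend only on `P² + Q²`. -/
lemma aux_sum_pow_phase (n m : ℕ) (hmn : m < n) (P Q : ℝ) :
    ∑ j ∈ Finset.range n,
        (P * Real.cos (2 * Real.pi * j / n) + Q * Real.sin (2 * Real.pi * j / n)) ^ m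
      = ∑ i ∈ Finset.range (m + 1),
          (if 2 * i = m then (m.choose i : ℝ) * (P ^ 2 + Q ^ 2) ^ i * n / 2 ^ m else 0) := by
  have hn : 0 < n := lt_of_le_of_lt (Nat.zero_le m) hmn
  apply Complex.ofReal_injective
  set ζ : ℂ := Complex.exp (2 * Real.pi * Complex.I / n) with hζ
  have hζ0 : ζ ≠ 0 := Complex.exp_ne_zero _
  set u : ℂ := (P : ℂ) - Q * Complex.I with hu
  set v : ℂ := (P : ℂ) + Q * Complex.I with hv
  have huv : u * v = ((P ^ 2 + Q ^ 2 : ℝ) : ℂ) := by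
    rw [hu, hv]
    push_cast
    linear_combination (-(Q : ℂ) ^ 2) * Complex.I_sq
  have hterm : ∀ j : ℕ,
      ((P * Real.cos (2 * Real.pi * j / n) + Q * Real.sin (2 * Real.pi * j / n) : ℝ) : ℂ)
        = (u * ζ ^ j + v * (ζ ^ j)⁻¹) / 2 := by
    intro j
    have h1 : ζ ^ j = Complex.exp (((2 * Real.pi * j / n : ℝ) : ℂ) * Complex.I) := by
      rw [hζ, ← Complex.exp_nat_mul]
      congr 1
      push_cast
      ring
    have h2 : (ζ ^ j)⁻¹
        = Complex.exp (((-(2 * Real.pi * j / n) : ℝ) : ℂ) * Complex.I) := by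
      rw [h1, ← Complex.exp_neg]
      congr 1
      push_cast
      ring
    rw [h2, h1, Complex.exp_mul_I, Complex.exp_mul_I,
      show ((-(2 * Real.pi * j / n) : ℝ) : ℂ) = -((2 * Real.pi * j / n : ℝ) : ℂ) by push_cast; ring,
      Complex.cos_neg, Complex.sin_neg, ← Complex.ofReal_cos, ← Complex.ofReal_sin,
      Complex.ofReal_add, Complex.ofReal_mul, Complex.ofReal_mul, hu, hv]
    linear_combination ((Q : ℂ) * ((Real.sin (2 * Real.pi * j / n) : ℝ) : ℂ)) * Complex.I_sq
  have hz : ∀ (d : ℤ) (j : ℕ), (ζ ^ d) ^ j = ζ ^ (d * j) := by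
    intro d j
    rw [← zpow_natCast (ζ ^ d) j, ← zpow_mul]
  have step1 : ∀ j ∈ Finset.range n,
      ((P * Real.cos (2 * Real.pi * j / n) + Q * Real.sin (2 * Real.pi * j / n) : ℝ) : ℂ) ^ m
        = ∑ i ∈ Finset.range (m + 1),
            (m.choose i : ℂ) * u ^ i * v ^ (m - i) * (ζ ^ (2 * (i : ℤ) - m)) ^ j / 2 ^ m := by
    intro j _
    rw [hterm j, div_pow, add_pow, Finset.sum_div]
    refine Finset.sum_congr rfl fun i hi => ?_
    have hi' : i ≤ m := Nat.lt_succ_iff.mp (Finset.mem_range.mp hi)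
    have key : (ζ ^ j) ^ i * ((ζ ^ j) ^ (m - i))⁻¹ = (ζ ^ (2 * (i : ℤ) - m)) ^ j := by
      rw [← pow_mul, ← pow_mul, hz, ← zpow_natCast ζ (j * i), ← zpow_natCast ζ (j * (m - i)),
        ← zpow_neg, ← zpow_add₀ hζ0]
      congr 1
      push_cast [Nat.cast_sub hi']
      ring
    rw [mul_pow, mul_pow, inv_pow]
    rw [show (u ^ i * (ζ ^ j) ^ i) * (v ^ (m - i) * ((ζ ^ j) ^ (m - i))⁻¹)
          = u ^ i * v ^ (m - i) * ((ζ ^ j) ^ i * ((ζ ^ j) ^ (m - i))⁻¹) by ring, key]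
    ring
  rw [Complex.ofReal_sum, Complex.ofReal_sum]
  simp only [Complex.ofReal_pow]
  rw [Finset.sum_congr rfl step1, Finset.sum_comm]
  refine Finset.sum_congr rfl fun i hi => ?_
  have hi' : i ≤ m := Nat.lt_succ_iff.mp (Finset.mem_range.mp hi)
  have hfact : ∑ j ∈ Finset.range n,
      (m.choose i : ℂ) * u ^ i * v ^ (m - i) * (ζ ^ (2 * (i : ℤ) - m)) ^ j / 2 ^ m
      = (m.choose i : ℂ) * u ^ i * v ^ (m - i)
          * (∑ j ∈ Finset.range n, (ζ ^ (2 * (i : ℤ) - m)) ^ j) / 2 ^ m := by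
    rw [Finset.mul_sum, Finset.sum_div]
  rw [hfact]
  by_cases h : 2 * i = m
  · have hd0 : 2 * (i : ℤ) - m = 0 := by omega
    have hmi : m - i = i := by omega
    rw [apply_ite Complex.ofReal, if_pos h, hd0, hmi]
    simp only [zpow_zero, one_pow, Finset.sum_const, Finset.card_range, nsmul_eq_mul, mul_one]
    rw [show (m.choose i : ℂ) * u ^ i * v ^ i * (n : ℂ) / 2 ^ m
        = (m.choose i : ℂ) * (u * v) ^ i * n / 2 ^ m by rw [mul_pow]; ring, huv]
    push_cast
    ring
  · have hd : (2 * (i : ℤ) - m) ≠ 0 := by omega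
    have hdn : (2 * (i : ℤ) - m).natAbs < n := by omega
    have hg := aux_geom_zero n hn _ hd hdn
    rw [← hζ] at hg
    rw [apply_ite Complex.ofReal, if_neg h, hg]
    simp

/-- `esymmR` as the evaluation of the multivariate elementary symmetric polynomial. -/
lemma aux_esymmR_eq_eval (n k : ℕ) (f : ℕ → ℝ) :
    esymmR n k f
      = MvPolynomial.eval (fun i : Fin n => f i) (MvPolynomial.esymm (Fin n) ℝ k) := by
  rw [MvPolynomial.esymm, map_sum, esymmR, ← Nat.Iio_eq_range, ← Fin.map_valEmbedding_univ,
    Finset.powersetCard_map, Finset.sum_map]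
  refine Finset.sum_congr rfl fun A _ => ?_
  rw [map_prod]
  simp only [MvPolynomial.eval_X]
  rw [show (Finset.mapEmbedding Fin.valEmbedding).toEmbedding A = A.map Fin.valEmbedding from rfl,
    Finset.prod_map]
  rfl

/-- Newton's identities: if power sums of degrees `1,…,N` agree, then so do the elementary
symmetric functions of degrees `≤ N`. -/
lemma aux_esymm_eq_of_psum_eq (n : ℕ) (f g : Fin n → ℝ) (N : ℕ)
    (hp : ∀ m, 1 ≤ m → m ≤ N →
      MvPolynomial.eval f (MvPolynomial.psum (Fin n) ℝ m)
        = MvPolynomial.eval g (MvPolynomial.psum (Fin n) ℝ m)) :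
    ∀ k, k ≤ N →
      MvPolynomial.eval f (MvPolynomial.esymm (Fin n) ℝ k)
        = MvPolynomial.eval g (MvPolynomial.esymm (Fin n) ℝ k) := by
  intro k
  induction k using Nat.strong_induction_on with
  | _ k ih =>
    intro hk
    rcases Nat.eq_zero_or_pos k with rfl | hk0
    · simp [MvPolynomial.esymm_zero]
    · have hNf := congrArg (MvPolynomial.eval f) (MvPolynomial.mul_esymm_eq_sum (Fin n) ℝ k)
      have hNg := congrArg (MvPolynomial.eval g) (MvPolynomial.mul_esymm_eq_sum (Fin n) ℝ k)
      simp only [map_mul, map_sum, map_pow, map_neg, map_one, map_natCast] at hNf hNg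
      have hsum : ∑ a ∈ Finset.HasAntidiagonal.antidiagonal k with a.1 < k,
            (-1 : ℝ) ^ a.1 * MvPolynomial.eval f (MvPolynomial.esymm (Fin n) ℝ a.1)
              * MvPolynomial.eval f (MvPolynomial.psum (Fin n) ℝ a.2)
          = ∑ a ∈ Finset.HasAntidiagonal.antidiagonal k with a.1 < k,
            (-1 : ℝ) ^ a.1 * MvPolynomial.eval g (MvPolynomial.esymm (Fin n) ℝ a.1)
              * MvPolynomial.eval g (MvPolynomial.psum (Fin n) ℝ a.2) := by
        refine Finset.sum_congr rfl fun a ha => ?_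
        rw [Finset.mem_filter, Finset.HasAntidiagonal.mem_antidiagonal] at ha
        have h1 : a.1 < k := ha.2
        have h2 : a.1 + a.2 = k := ha.1
        rw [ih a.1 h1 (by omega), hp a.2 (by omega) (by omega)]
      have hkk : ((k : ℝ)) * MvPolynomial.eval f (MvPolynomial.esymm (Fin n) ℝ k)
          = ((k : ℝ)) * MvPolynomial.eval g (MvPolynomial.esymm (Fin n) ℝ k) := by
        rw [hNf, hNg, hsum]
      exact mul_left_cancel₀ (Nat.cast_ne_zero.mpr hk0.ne') hkk

/-- For `0 ≤ k ≤ n−1` and all `x, y ∈ ℝ²`,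
`e_k(⟨x, r_0.y⟩, …, ⟨x, r_{n−1}.y⟩) = e_k(⟨x, s_0.y⟩, …, ⟨x, s_{n−1}.y⟩)`. -/
theorem esymm_rot_eq_esymm_refl (n : ℕ) (hn : 3 ≤ n) (k : ℕ) (hk : k ≤ n - 1)
    (x y : ℝ × ℝ) :
    esymmR n k (fun j => dot2 x (rotMap n j y)) =
      esymmR n k (fun j => dot2 x (reflMap n j y)) := by
  set P : ℝ := x.1 * y.1 + x.2 * y.2 with hP
  set Q : ℝ := x.2 * y.1 - x.1 * y.2 with hQ
  set P' : ℝ := x.2 * y.2 - x.1 * y.1 with hP'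
  set Q' : ℝ := x.1 * y.2 + x.2 * y.1 with hQ'
  have hrot : (fun j : ℕ => dot2 x (rotMap n j y))
      = fun j : ℕ => P * Real.cos (2 * Real.pi * j / n) + Q * Real.sin (2 * Real.pi * j / n) := by
    funext j
    simp only [dot2, rotMap, hP, hQ]
    push_cast
    ring
  have hrefl : (fun j : ℕ => dot2 x (reflMap n j y))
      = fun j : ℕ => P' * Real.cos (2 * Real.pi * j / n) + Q' * Real.sin (2 * Real.pi * j / n) := by
    funext j
    simp only [dot2, reflMap, hP', hQ']
    push_cast
    ring
  have hsq : P ^ 2 + Q ^ 2 = P' ^ 2 + Q' ^ 2 := by rw [hP, hQ, hP', hQ']; ring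
  rw [hrot, hrefl, aux_esymmR_eq_eval, aux_esymmR_eq_eval]
  apply aux_esymm_eq_of_psum_eq n _ _ (n - 1) _ k hk
  intro m hm1 hm2
  have hmn : m < n := by omega
  simp only [MvPolynomial.psum, map_sum, map_pow, MvPolynomial.eval_X]
  rw [Fin.sum_univ_eq_sum_range
      (fun j => (P * Real.cos (2 * Real.pi * j / n) + Q * Real.sin (2 * Real.pi * j / n)) ^ m),
    Fin.sum_univ_eq_sum_range
      (fun j => (P' * Real.cos (2 * Real.pi * j / n) + Q' * Real.sin (2 * Real.pi * j / n)) ^ m),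
    aux_sum_pow_phase n m hmn, aux_sum_pow_phase n m hmn, hsq]
end
end

section
/- For every integer k with 0 ≤ k ≤ n−1 and all x, y ∈ ℝ², one has e_k(ρ_0, ρ_1, …, ρ_{n−1}) = e_k(σ_0, σ_1, …, σ_{n−1}), where ρ_j = ρ_j(x,y) and σ_j = σ_j(x,y); moreover e_n(ρ_0, …, ρ_{n−1}) = 0 and e_n(σ_0, …, σ_{n−1}) = ∏_{j∈ℤ/nℤ} σ_j. -/
open Real Finset

noncomputable section

namespace Aux

def shf (n : ℕ) (j : ℕ) : ℕ := if j < n then (j + 1) % n else j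
def shg (n : ℕ) (j : ℕ) : ℕ := if j < n then (j + (n - 1)) % n else j

variable {n : ℕ}

lemma shf_lt (hn : 0 < n) {j : ℕ} (hj : j < n) : shf n j < n := by
  simp only [shf, if_pos hj]; exact Nat.mod_lt _ hn

lemma shg_lt (hn : 0 < n) {j : ℕ} (hj : j < n) : shg n j < n := by
  simp only [shg, if_pos hj]; exact Nat.mod_lt _ hn

lemma shg_shf (hn : 0 < n) (j : ℕ) : shg n (shf n j) = j := by
  by_cases hj : j < n
  · have h1 : shf n j < n := shf_lt hn hj
    simp only [shf, if_pos hj] at h1 ⊢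
    simp only [shg, if_pos h1]
    rw [Nat.mod_add_mod]
    have : j + 1 + (n - 1) = j + n := by omega
    rw [this, Nat.add_mod_right, Nat.mod_eq_of_lt hj]
  · simp [shf, shg, hj]

lemma shf_shg (hn : 0 < n) (j : ℕ) : shf n (shg n j) = j := by
  by_cases hj : j < n
  · have h1 : shg n j < n := shg_lt hn hj
    simp only [shg, if_pos hj] at h1 ⊢
    simp only [shf, if_pos h1]
    rw [Nat.mod_add_mod]
    have : j + (n - 1) + 1 = j + n := by omega
    rw [this, Nat.add_mod_right, Nat.mod_eq_of_lt hj]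
  · simp [shf, shg, hj]

lemma shf_inj (hn : 0 < n) : Function.Injective (shf n) :=
  Function.LeftInverse.injective (shg_shf hn)

lemma shg_inj (hn : 0 < n) : Function.Injective (shg n) :=
  Function.LeftInverse.injective (shf_shg hn)

lemma pow_mod_n {ζ : ℂ} (hz : ζ ^ n = 1) (m : ℕ) : ζ ^ (m % n) = ζ ^ m := by
  conv_rhs => rw [← Nat.mod_add_div m n, pow_add, pow_mul, hz, one_pow, mul_one]

lemma prod_image_shf (hn : 0 < n) {ζ : ℂ} (hz : ζ ^ n = 1) {S : Finset ℕ}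
    (hS : S ⊆ range n) :
    ∏ j ∈ S.image (shf n), ζ ^ j = ζ ^ S.card * ∏ j ∈ S, ζ ^ j := by
  rw [Finset.prod_image (fun x _ y _ h => shf_inj hn h)]
  rw [Finset.prod_congr rfl (g := fun j => ζ * ζ ^ j) ?_]
  · rw [Finset.prod_mul_distrib, Finset.prod_const]
  · intro j hj
    have hjn : j < n := Finset.mem_range.1 (hS hj)
    simp only [shf, if_pos hjn]
    rw [pow_mod_n hz, pow_succ, mul_comm]

lemma expand_prod (P a b ζ : ℂ) (A : Finset ℕ) :
    ∏ j ∈ A, (P - a * ζ ^ j - b * ζ⁻¹ ^ j)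
      = ∑ S ∈ A.powerset, ∑ T ∈ (A \ S).powerset,
          (-a) ^ S.card * (-b) ^ T.card * P ^ ((A \ S) \ T).card *
            (∏ j ∈ S, ζ ^ j) * ∏ j ∈ T, ζ⁻¹ ^ j := by
  have h1 : ∀ j ∈ A, P - a * ζ ^ j - b * ζ⁻¹ ^ j
      = (-(a * ζ ^ j)) + (P - b * ζ⁻¹ ^ j) := fun j _ => by ring
  rw [Finset.prod_congr rfl h1, Finset.prod_add]
  refine Finset.sum_congr rfl fun S hS => ?_
  have h2 : ∀ j ∈ A \ S, P - b * ζ⁻¹ ^ j = (-(b * ζ⁻¹ ^ j)) + P := fun j _ => by ring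
  rw [Finset.prod_congr rfl h2, Finset.prod_add, Finset.mul_sum]
  refine Finset.sum_congr rfl fun T hT => ?_
  have hs : ∏ j ∈ S, -(a * ζ ^ j) = (-a) ^ S.card * ∏ j ∈ S, ζ ^ j := by
    rw [Finset.prod_congr rfl (g := fun j => (-a) * ζ ^ j) (fun j _ => by ring),
      Finset.prod_mul_distrib, Finset.prod_const]
  have ht : ∏ j ∈ T, -(b * ζ⁻¹ ^ j) = (-b) ^ T.card * ∏ j ∈ T, ζ⁻¹ ^ j := by
    rw [Finset.prod_congr rfl (g := fun j => (-b) * ζ⁻¹ ^ j) (fun j _ => by ring),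
      Finset.prod_mul_distrib, Finset.prod_const]
  rw [hs, ht, Finset.prod_const]
  ring

abbrev Tri := (_ : Finset ℕ) × (_ : Finset ℕ) × Finset ℕ

def Idx (n k : ℕ) : Finset Tri :=
  ((range n).powersetCard k).sigma fun A => A.powerset.sigma fun S => (A \ S).powerset

noncomputable def Fterm (P a b ζ : ℂ) (t : Tri) : ℂ :=
  (-a) ^ t.2.1.card * (-b) ^ t.2.2.card * P ^ ((t.1 \ t.2.1) \ t.2.2).card *
    (∏ j ∈ t.2.1, ζ ^ j) * ∏ j ∈ t.2.2, ζ⁻¹ ^ j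

def dTri (t : Tri) : ℤ := (t.2.1.card : ℤ) - t.2.2.card

lemma mem_Idx {n k : ℕ} {t : Tri} :
    t ∈ Idx n k ↔ (t.1 ⊆ range n ∧ t.1.card = k) ∧ t.2.1 ⊆ t.1 ∧ t.2.2 ⊆ t.1 \ t.2.1 := by
  simp [Idx, Finset.mem_sigma, Finset.mem_powersetCard, Finset.mem_powerset]

lemma sum_eq_idx (P a b ζ : ℂ) (n k : ℕ) :
    ∑ A ∈ (range n).powersetCard k, ∏ j ∈ A, (P - a * ζ ^ j - b * ζ⁻¹ ^ j)
      = ∑ t ∈ Idx n k, Fterm P a b ζ t := by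
  rw [Idx]
  rw [Finset.sum_sigma]
  refine Finset.sum_congr rfl fun A _ => ?_
  rw [Finset.sum_sigma, expand_prod]
  rfl

def Phi (n : ℕ) (t : Tri) : Tri := ⟨t.1.image (shf n), t.2.1.image (shf n), t.2.2.image (shf n)⟩
def Psi (n : ℕ) (t : Tri) : Tri := ⟨t.1.image (shg n), t.2.1.image (shg n), t.2.2.image (shg n)⟩

lemma image_mem_range (hn : 0 < n) {f : ℕ → ℕ} (hfr : ∀ j < n, f j < n)
    {S : Finset ℕ} (hS : S ⊆ range n) : S.image f ⊆ range n := by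
  intro j hj
  rcases Finset.mem_image.1 hj with ⟨i, hi, rfl⟩
  exact Finset.mem_range.2 (hfr i (Finset.mem_range.1 (hS hi)))

lemma map_mem_Idx (hn : 0 < n) {k : ℕ} {f : ℕ → ℕ} (hf : Function.Injective f)
    (hfr : ∀ j < n, f j < n) {t : Tri} (ht : t ∈ Idx n k) :
    (⟨t.1.image f, t.2.1.image f, t.2.2.image f⟩ : Tri) ∈ Idx n k := by
  rw [mem_Idx] at ht ⊢
  obtain ⟨⟨h1, h2⟩, h3, h4⟩ := ht
  refine ⟨⟨image_mem_range hn hfr h1, by rw [Finset.card_image_of_injective _ hf, h2]⟩,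
    Finset.image_subset_image h3, ?_⟩
  rw [← Finset.image_sdiff _ _ hf]
  exact Finset.image_subset_image h4

lemma Psi_Phi (hn : 0 < n) (t : Tri) : Psi n (Phi n t) = t := by
  have h : ∀ S : Finset ℕ, (S.image (shf n)).image (shg n) = S := by
    intro S
    rw [Finset.image_image]
    have : shg n ∘ shf n = id := funext (shg_shf hn)
    rw [this, Finset.image_id]
  simp only [Phi, Psi, h]

lemma Phi_Psi (hn : 0 < n) (t : Tri) : Phi n (Psi n t) = t := by
  have h : ∀ S : Finset ℕ, (S.image (shg n)).image (shf n) = S := by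
    intro S
    rw [Finset.image_image]
    have : shf n ∘ shg n = id := funext (shf_shg hn)
    rw [this, Finset.image_id]
  simp only [Phi, Psi, h]

lemma Fterm_Phi (hn : 0 < n) {k : ℕ} {ζ : ℂ} (hζ0 : ζ ≠ 0) (hz : ζ ^ n = 1)
    (P a b : ℂ) {t : Tri} (ht : t ∈ Idx n k) :
    Fterm P a b ζ (Phi n t) = ζ ^ dTri t * Fterm P a b ζ t := by
  rw [mem_Idx] at ht
  obtain ⟨⟨h1, _⟩, h3, h4⟩ := ht
  have hS : t.2.1 ⊆ range n := h3.trans h1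
  have hT : t.2.2 ⊆ range n := h4.trans ((Finset.sdiff_subset).trans h1)
  have hinv : (ζ⁻¹) ^ n = 1 := by rw [inv_pow, hz, inv_one]
  have hsd : ((Phi n t).1 \ (Phi n t).2.1) \ (Phi n t).2.2
      = ((t.1 \ t.2.1) \ t.2.2).image (shf n) := by
    simp only [Phi]
    rw [Finset.image_sdiff _ _ (shf_inj hn), Finset.image_sdiff _ _ (shf_inj hn)]
  have hcard : ∀ S : Finset ℕ, (S.image (shf n)).card = S.card :=
    fun S => Finset.card_image_of_injective _ (shf_inj hn)
  simp only [Fterm, Phi] at *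
  rw [hcard, hcard, prod_image_shf hn hz hS, prod_image_shf hn hinv hT]
  have : (((t.1.image (shf n)) \ (t.2.1.image (shf n))) \ (t.2.2.image (shf n))).card
      = ((t.1 \ t.2.1) \ t.2.2).card := by
    rw [← Finset.image_sdiff _ _ (shf_inj hn), ← Finset.image_sdiff _ _ (shf_inj hn), hcard]
  rw [this]
  rw [dTri, zpow_sub₀ hζ0, zpow_natCast, zpow_natCast, div_eq_mul_inv, ← inv_pow]
  ring


lemma Tm_step (hn : 0 < n) {k : ℕ} {ζ : ℂ} (hζ0 : ζ ≠ 0) (hz : ζ ^ n = 1)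
    (P a b : ℂ) (m : ℕ) :
    ∑ t ∈ Idx n k, (ζ ^ dTri t) ^ (m + 1) * Fterm P a b ζ t
      = ∑ t ∈ Idx n k, (ζ ^ dTri t) ^ m * Fterm P a b ζ t := by
  refine Finset.sum_nbij' (Phi n) (Psi n)
    (fun t ht => map_mem_Idx hn (shf_inj hn) (fun j hj => shf_lt hn hj) ht)
    (fun t ht => map_mem_Idx hn (shg_inj hn) (fun j hj => shg_lt hn hj) ht)
    (fun t _ => Psi_Phi hn t) (fun t _ => Phi_Psi hn t) ?_
  intro t ht
  have hd : dTri (Phi n t) = dTri t := by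
    simp only [dTri, Phi, Finset.card_image_of_injective _ (shf_inj hn)]
  rw [Fterm_Phi hn hζ0 hz P a b ht, hd, pow_succ]
  ring

lemma Tm_all (hn : 0 < n) {k : ℕ} {ζ : ℂ} (hζ0 : ζ ≠ 0) (hz : ζ ^ n = 1)
    (P a b : ℂ) (m : ℕ) :
    ∑ t ∈ Idx n k, (ζ ^ dTri t) ^ m * Fterm P a b ζ t
      = ∑ t ∈ Idx n k, Fterm P a b ζ t := by
  induction m with
  | zero => simp
  | succ m ih => rw [Tm_step hn hζ0 hz, ih]

lemma card_le_of_mem_Idx {k : ℕ} {t : Tri} (ht : t ∈ Idx n k) :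
    t.2.1.card ≤ k ∧ t.2.2.card ≤ k := by
  rw [mem_Idx] at ht
  obtain ⟨⟨h1, h2⟩, h3, h4⟩ := ht
  constructor
  · rw [← h2]; exact Finset.card_le_card h3
  · rw [← h2]; exact Finset.card_le_card (h4.trans Finset.sdiff_subset)

lemma sum_eq_diag (hn : 0 < n) {k : ℕ} (hk : k < n) {ζ : ℂ} (hζ0 : ζ ≠ 0) (hz : ζ ^ n = 1)
    (hprim : ∀ d : ℤ, d ≠ 0 → d.natAbs < n → ζ ^ d ≠ 1) (P a b : ℂ) :
    ∑ t ∈ Idx n k, Fterm P a b ζ t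
      = ∑ t ∈ (Idx n k).filter (fun t => dTri t = 0), Fterm P a b ζ t := by
  have hmain : (n : ℂ) * ∑ t ∈ Idx n k, Fterm P a b ζ t
      = (n : ℂ) * ∑ t ∈ (Idx n k).filter (fun t => dTri t = 0), Fterm P a b ζ t := by
    calc (n : ℂ) * ∑ t ∈ Idx n k, Fterm P a b ζ t
        = ∑ m ∈ range n, ∑ t ∈ Idx n k, (ζ ^ dTri t) ^ m * Fterm P a b ζ t := by
          rw [Finset.sum_congr rfl fun m _ => Tm_all hn hζ0 hz P a b m]
          rw [Finset.sum_const, Finset.card_range, nsmul_eq_mul]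
      _ = ∑ t ∈ Idx n k, (∑ m ∈ range n, (ζ ^ dTri t) ^ m) * Fterm P a b ζ t := by
          rw [Finset.sum_comm]
          exact Finset.sum_congr rfl fun t _ => by rw [Finset.sum_mul]
      _ = ∑ t ∈ Idx n k, (if dTri t = 0 then (n : ℂ) else 0) * Fterm P a b ζ t := by
          refine Finset.sum_congr rfl fun t ht => ?_
          congr 1
          by_cases hd : dTri t = 0
          · simp [hd]
          · rw [if_neg hd]
            have hne : ζ ^ dTri t ≠ 1 := by
              refine hprim _ hd ?_
              obtain ⟨hp, hq⟩ := card_le_of_mem_Idx ht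
              simp only [dTri]
              omega
            have hpow : (ζ ^ dTri t) ^ n = 1 := by
              rw [← zpow_natCast (ζ ^ dTri t) n, ← zpow_mul, mul_comm, zpow_mul,
                zpow_natCast, hz, one_zpow]
            rw [geom_sum_eq hne, hpow, sub_self, zero_div]
      _ = (n : ℂ) * ∑ t ∈ (Idx n k).filter (fun t => dTri t = 0), Fterm P a b ζ t := by
          rw [Finset.mul_sum, Finset.sum_filter]
          refine Finset.sum_congr rfl fun t _ => ?_
          by_cases hd : dTri t = 0 <;> simp [hd]
  have hn' : (n : ℂ) ≠ 0 := Nat.cast_ne_zero.2 hn.ne'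
  exact mul_left_cancel₀ hn' hmain

lemma key (hn : 0 < n) {k : ℕ} (hk : k < n) {ζ : ℂ} (hζ0 : ζ ≠ 0) (hz : ζ ^ n = 1)
    (hprim : ∀ d : ℤ, d ≠ 0 → d.natAbs < n → ζ ^ d ≠ 1)
    (P a b a' b' : ℂ) (hab : a * b = a' * b') :
    ∑ A ∈ (range n).powersetCard k, ∏ j ∈ A, (P - a * ζ ^ j - b * ζ⁻¹ ^ j)
      = ∑ A ∈ (range n).powersetCard k, ∏ j ∈ A, (P - a' * ζ ^ j - b' * ζ⁻¹ ^ j) := by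
  rw [sum_eq_idx, sum_eq_idx, sum_eq_diag hn hk hζ0 hz hprim,
    sum_eq_diag hn hk hζ0 hz hprim]
  refine Finset.sum_congr rfl fun t ht => ?_
  have hd : (t.2.1.card : ℤ) = t.2.2.card := by
    have := (Finset.mem_filter.1 ht).2
    simp only [dTri] at this
    omega
  have hd' : t.2.1.card = t.2.2.card := by exact_mod_cast hd
  simp only [Fterm, hd']
  rw [show (-a) ^ t.2.2.card * (-b) ^ t.2.2.card = (-a') ^ t.2.2.card * (-b') ^ t.2.2.card by
    rw [← mul_pow, ← mul_pow, neg_mul_neg, neg_mul_neg, hab]]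


def zeta (n : ℕ) : ℂ := Complex.exp (2 * Real.pi * Complex.I / n)

lemma zeta_ne_zero (n : ℕ) : zeta n ≠ 0 := Complex.exp_ne_zero _

lemma zeta_pow_n {n : ℕ} (hn : 0 < n) : zeta n ^ n = 1 := by
  rw [zeta, ← Complex.exp_nat_mul]
  have hnc : (n : ℂ) ≠ 0 := Nat.cast_ne_zero.2 hn.ne'
  have : (n : ℂ) * (2 * (Real.pi : ℂ) * Complex.I / n) = 2 * (Real.pi : ℂ) * Complex.I := by
    field_simp
  rw [this, Complex.exp_two_pi_mul_I]

lemma zeta_prim {n : ℕ} (hn : 0 < n) :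
    ∀ d : ℤ, d ≠ 0 → d.natAbs < n → zeta n ^ d ≠ 1 := by
  intro d hd hdn h1
  rw [zeta, ← Complex.exp_int_mul, Complex.exp_eq_one_iff] at h1
  obtain ⟨m, hm⟩ := h1
  have hπ : (Real.pi : ℂ) ≠ 0 := by exact_mod_cast Real.pi_ne_zero
  have hI : Complex.I ≠ 0 := Complex.I_ne_zero
  have hnc : (n : ℂ) ≠ 0 := Nat.cast_ne_zero.2 hn.ne'
  have h4 : (d : ℂ) * (2 * (Real.pi : ℂ) * Complex.I)
      = ((m : ℂ) * n) * (2 * (Real.pi : ℂ) * Complex.I) := by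
    field_simp at hm
    linear_combination (2 * (Real.pi : ℂ) * Complex.I) * hm
  have h2 : (d : ℂ) = (m : ℂ) * n :=
    mul_right_cancel₀ (mul_ne_zero (mul_ne_zero two_ne_zero hπ) hI) h4
  have h5 : d = m * n := by exact_mod_cast h2
  have h6 : d.natAbs = m.natAbs * n := by rw [h5, Int.natAbs_mul, Int.natAbs_natCast]
  have hm0 : m.natAbs ≠ 0 := by
    intro h0
    apply hd
    rw [h5, Int.natAbs_eq_zero.1 h0, zero_mul]
  have : n ≤ m.natAbs * n := Nat.le_mul_of_pos_left n (Nat.pos_of_ne_zero hm0)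
  omega

lemma zeta_pow_j (n : ℕ) (j : ℕ) :
    zeta n ^ j = (Real.cos (2 * Real.pi * (j : ℝ) / n) : ℂ)
      + (Real.sin (2 * Real.pi * (j : ℝ) / n) : ℂ) * Complex.I := by
  rw [zeta, ← Complex.exp_nat_mul]
  have : (j : ℂ) * (2 * (Real.pi : ℂ) * Complex.I / n)
      = ((2 * Real.pi * (j : ℝ) / n : ℝ) : ℂ) * Complex.I := by
    push_cast; ring
  rw [this, Complex.exp_mul_I, ← Complex.ofReal_cos, ← Complex.ofReal_sin]

lemma zeta_inv_pow_j (n : ℕ) (j : ℕ) :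
    (zeta n)⁻¹ ^ j = (Real.cos (2 * Real.pi * (j : ℝ) / n) : ℂ)
      - (Real.sin (2 * Real.pi * (j : ℝ) / n) : ℂ) * Complex.I := by
  rw [zeta, ← Complex.exp_neg, ← Complex.exp_nat_mul]
  have : (j : ℂ) * -(2 * (Real.pi : ℂ) * Complex.I / n)
      = ((-(2 * Real.pi * (j : ℝ) / n) : ℝ) : ℂ) * Complex.I := by
    push_cast; ring
  rw [this, Complex.exp_mul_I, ← Complex.ofReal_cos, ← Complex.ofReal_sin,
    Real.cos_neg, Real.sin_neg]
  push_cast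
  ring

lemma rho_cast (n : ℕ) (x y : ℝ × ℝ) (j : ℕ) :
    ((rhoJ n j x y : ℝ) : ℂ)
      = ((dot2 x y : ℝ) : ℂ)
        - ((((dot2 x y : ℝ) : ℂ) + ((x.1 * y.2 - x.2 * y.1 : ℝ) : ℂ) * Complex.I) / 2)
            * zeta n ^ j
        - ((((dot2 x y : ℝ) : ℂ) - ((x.1 * y.2 - x.2 * y.1 : ℝ) : ℂ) * Complex.I) / 2)
            * (zeta n)⁻¹ ^ j := by
  rw [zeta_pow_j, zeta_inv_pow_j]
  simp only [rhoJ, dot2, rotMap, Prod.fst_sub, Prod.snd_sub, Int.cast_natCast]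
  push_cast
  linear_combination ((x.1 : ℂ) * y.2 - (x.2 : ℂ) * y.1)
    * (Complex.sin (2 * (Real.pi : ℂ) * (j : ℂ) / (n : ℂ))) * Complex.I_sq

lemma sigma_cast (n : ℕ) (x y : ℝ × ℝ) (j : ℕ) :
    ((sigmaJ n j x y : ℝ) : ℂ)
      = ((dot2 x y : ℝ) : ℂ)
        - (((-(x.1 * y.1 - x.2 * y.2 : ℝ) : ℂ) - ((x.1 * y.2 + x.2 * y.1 : ℝ) : ℂ) * Complex.I) / 2)
            * zeta n ^ j
        - (((-(x.1 * y.1 - x.2 * y.2 : ℝ) : ℂ) + ((x.1 * y.2 + x.2 * y.1 : ℝ) : ℂ) * Complex.I) / 2)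
            * (zeta n)⁻¹ ^ j := by
  rw [zeta_pow_j, zeta_inv_pow_j]
  simp only [sigmaJ, dot2, reflMap, Prod.fst_sub, Prod.snd_sub, Int.cast_natCast]
  push_cast
  linear_combination (-((x.1 : ℂ) * y.2 + (x.2 : ℂ) * y.1))
    * (Complex.sin (2 * (Real.pi : ℂ) * (j : ℂ) / (n : ℂ))) * Complex.I_sq

lemma hab_eq (x y : ℝ × ℝ) :
    ((((dot2 x y : ℝ) : ℂ) + ((x.1 * y.2 - x.2 * y.1 : ℝ) : ℂ) * Complex.I) / 2)
      * ((((dot2 x y : ℝ) : ℂ) - ((x.1 * y.2 - x.2 * y.1 : ℝ) : ℂ) * Complex.I) / 2)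
    = (((-(x.1 * y.1 - x.2 * y.2 : ℝ) : ℂ) - ((x.1 * y.2 + x.2 * y.1 : ℝ) : ℂ) * Complex.I) / 2)
      * (((-(x.1 * y.1 - x.2 * y.2 : ℝ) : ℂ) + ((x.1 * y.2 + x.2 * y.1 : ℝ) : ℂ) * Complex.I) / 2) := by
  simp only [dot2]
  push_cast
  linear_combination ((x.1 : ℂ) * x.2 * y.1 * y.2) * Complex.I_sq

end Aux

/-- For `0 ≤ k ≤ n−1`, `e_k(ρ_0, …, ρ_{n−1}) = e_k(σ_0, …, σ_{n−1})`; moreover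
`e_n(ρ_0, …, ρ_{n−1}) = 0` and `e_n(σ_0, …, σ_{n−1}) = ∏_j σ_j`. -/
theorem esymm_rho_eq_esymm_sigma (n : ℕ) (hn : 3 ≤ n) (x y : ℝ × ℝ) :
    (∀ k ≤ n - 1,
        esymmR n k (fun j => rhoJ n j x y) = esymmR n k (fun j => sigmaJ n j x y)) ∧
      esymmR n n (fun j => rhoJ n j x y) = 0 ∧
      esymmR n n (fun j => sigmaJ n j x y) = ∏ j ∈ Finset.range n, sigmaJ n j x y := by
  have hn0 : 0 < n := by omega
  refine ⟨?_, ?_, ?_⟩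
  · intro k hk
    have hk' : k < n := by omega
    apply Complex.ofReal_injective
    have e1 : ((esymmR n k fun j => rhoJ n j x y : ℝ) : ℂ)
        = ∑ A ∈ (range n).powersetCard k, ∏ j ∈ A,
            (((dot2 x y : ℝ) : ℂ)
              - ((((dot2 x y : ℝ) : ℂ) + ((x.1 * y.2 - x.2 * y.1 : ℝ) : ℂ) * Complex.I) / 2)
                  * Aux.zeta n ^ j
              - ((((dot2 x y : ℝ) : ℂ) - ((x.1 * y.2 - x.2 * y.1 : ℝ) : ℂ) * Complex.I) / 2)
                  * (Aux.zeta n)⁻¹ ^ j) := by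
      rw [esymmR]
      push_cast
      refine Finset.sum_congr rfl fun A _ => Finset.prod_congr rfl fun j _ => ?_
      have h := Aux.rho_cast n x y j
      push_cast at h ⊢
      linear_combination h
    have e2 : ((esymmR n k fun j => sigmaJ n j x y : ℝ) : ℂ)
        = ∑ A ∈ (range n).powersetCard k, ∏ j ∈ A,
            (((dot2 x y : ℝ) : ℂ)
              - (((-(x.1 * y.1 - x.2 * y.2 : ℝ) : ℂ)
                    - ((x.1 * y.2 + x.2 * y.1 : ℝ) : ℂ) * Complex.I) / 2)
                  * Aux.zeta n ^ j
              - (((-(x.1 * y.1 - x.2 * y.2 : ℝ) : ℂ)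
                    + ((x.1 * y.2 + x.2 * y.1 : ℝ) : ℂ) * Complex.I) / 2)
                  * (Aux.zeta n)⁻¹ ^ j) := by
      rw [esymmR]
      push_cast
      refine Finset.sum_congr rfl fun A _ => Finset.prod_congr rfl fun j _ => ?_
      have h := Aux.sigma_cast n x y j
      push_cast at h ⊢
      linear_combination h
    rw [e1, e2]
    exact Aux.key hn0 hk' (Aux.zeta_ne_zero n) (Aux.zeta_pow_n hn0) (Aux.zeta_prim hn0)
      _ _ _ _ _ (Aux.hab_eq x y)
  · have hpc : (range n).powersetCard n = {range n} := by
      have h := Finset.powersetCard_self (range n)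
      rwa [Finset.card_range] at h
    rw [esymmR, hpc, Finset.sum_singleton]
    apply Finset.prod_eq_zero (Finset.mem_range.2 (by omega : 0 < n))
    simp [rhoJ, rotMap, dot2, Prod.fst_sub, Prod.snd_sub]
  · have hpc : (range n).powersetCard n = {range n} := by
      have h := Finset.powersetCard_self (range n)
      rwa [Finset.card_range] at h
    rw [esymmR, hpc, Finset.sum_singleton]
end
end

section
/- For every c ∈ ℝ and all x, y ∈ ℝ², one has D_R = D_S − c^n·𝔖, i.e. ∏_{j∈ℤ/nℤ}(1 + c·ρ_j(x,y)) = ∏_{j∈ℤ/nℤ}(1 + c·σ_j(x,y)) − c^n·∏_{j∈ℤ/nℤ} σ_j(x,y). -/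
open Real Finset

noncomputable section

lemma prod_lin_aux {n : ℕ} (hn : 0 < n) {μ : ℂ} (hμ : IsPrimitiveRoot μ n) (u v : ℂ) :
    ∏ j ∈ Finset.range n, (u - v * μ ^ j) = u ^ n - v ^ n := by
  have himg : Polynomial.nthRootsFinset n (1 : ℂ) = (Finset.range n).image (μ ^ ·) := by
    have : Polynomial.nthRoots n (1 : ℂ) = (Multiset.range n).map (μ ^ · * 1) :=
      hμ.nthRoots_eq (one_pow n)
    rw [Polynomial.nthRootsFinset]
    simp only [this, mul_one]
    ext z
    simp [Multiset.mem_toFinset, Multiset.mem_map, Multiset.mem_range, Finset.mem_image]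
  rw [show u ^ n - v ^ n = ∏ ζ ∈ Polynomial.nthRootsFinset n (1 : ℂ), (u - ζ * v) from
    hμ.pow_sub_pow_eq_prod_sub_mul u v hn, himg,
    Finset.prod_image (fun i hi j hj h => hμ.injOn_pow (by simpa using hi) (by simpa using hj) h)]
  exact Finset.prod_congr rfl fun j _ => by ring

lemma prod_pow_self_aux {n : ℕ} (hn : 0 < n) {μ : ℂ} (hμ : IsPrimitiveRoot μ n) :
    ∏ j ∈ Finset.range n, μ ^ j = (-1) ^ (n + 1) := by
  have h := prod_lin_aux hn hμ 0 1
  have h2 : ∏ j ∈ Finset.range n, ((0:ℂ) - 1 * μ ^ j) =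
      (-1) ^ n * ∏ j ∈ Finset.range n, μ ^ j := by
    rw [show ((-1 : ℂ)) ^ n = ∏ _j ∈ Finset.range n, (-1 : ℂ) by simp,
      ← Finset.prod_mul_distrib]
    exact Finset.prod_congr rfl fun j _ => by ring
  rw [h2, zero_pow hn.ne', one_pow] at h
  have h3 : ((-1 : ℂ)) ^ n * ((-1 : ℂ)) ^ n * ∏ j ∈ Finset.range n, μ ^ j
      = ((-1 : ℂ)) ^ n * (0 - 1) := by rw [mul_assoc, h]
  have hsq : ((-1 : ℂ)) ^ n * ((-1 : ℂ)) ^ n = 1 := by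
    rw [← pow_add, ← two_mul, pow_mul]; norm_num
  rw [hsq, one_mul] at h3
  rw [h3, pow_succ]; ring

lemma key_prod_aux {n : ℕ} (hn : 0 < n) {ζ : ℂ} (hζ : IsPrimitiveRoot ζ n)
    (A B C t₁ t₂ : ℂ) (h1 : t₁ + t₂ = A) (h2 : t₁ * t₂ = B * C) :
    ∏ j ∈ Finset.range n, (A - B * ζ ^ j - C * (ζ ^ j)⁻¹)
      = t₁ ^ n + t₂ ^ n - B ^ n - C ^ n := by
  have hζ0 : ζ ≠ 0 := by
    intro h
    have h1 := hζ.pow_eq_one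
    rw [h, zero_pow hn.ne'] at h1
    exact zero_ne_one h1
  by_cases hB : B = 0
  · subst hB
    have hinv : IsPrimitiveRoot ζ⁻¹ n := hζ.inv
    have hL : ∏ j ∈ Finset.range n, (A - (0:ℂ) * ζ ^ j - C * (ζ ^ j)⁻¹)
        = A ^ n - C ^ n := by
      rw [← prod_lin_aux hn hinv A C]
      exact Finset.prod_congr rfl fun j _ => by rw [inv_pow]; ring
    rw [hL]
    rcases mul_eq_zero.1 (h2.trans (by ring)) with h | h
    · have ht2 : t₂ = A := by linear_combination h1 - h
      rw [h, ht2]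
      simp [zero_pow hn.ne']
    · have ht1 : t₁ = A := by linear_combination h1 - h
      rw [h, ht1]
      simp [zero_pow hn.ne']
  · have hfac : ∀ j : ℕ, A - B * ζ ^ j - C * (ζ ^ j)⁻¹
        = (-B) * ((ζ ^ j)⁻¹ * ((ζ ^ j - t₁ / B) * (ζ ^ j - t₂ / B))) := by
      intro j
      have hzj : (ζ : ℂ) ^ j ≠ 0 := pow_ne_zero _ hζ0
      field_simp
      linear_combination (-(B * ζ^j)) * h1 + h2
    have hp1 : ∀ t : ℂ, ∏ j ∈ Finset.range n, (ζ ^ j - t / B)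
        = (-1) ^ n * ((t / B) ^ n - 1) := by
      intro t
      rw [show ((-1:ℂ)) ^ n * ((t / B) ^ n - 1)
          = (-1) ^ n * ∏ j ∈ Finset.range n, (t / B - 1 * ζ ^ j) by
            rw [prod_lin_aux hn hζ, one_pow],
        show ((-1:ℂ)) ^ n = ∏ _j ∈ Finset.range n, (-1:ℂ) by simp,
        ← Finset.prod_mul_distrib]
      exact Finset.prod_congr rfl fun j _ => by ring
    rw [Finset.prod_congr rfl fun j _ => hfac j, Finset.prod_mul_distrib,
      Finset.prod_mul_distrib, Finset.prod_mul_distrib, Finset.prod_const,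
      Finset.card_range, Finset.prod_inv_distrib, prod_pow_self_aux hn hζ,
      hp1 t₁, hp1 t₂]
    have hBn : (B : ℂ) ^ n ≠ 0 := pow_ne_zero _ hB
    have hpow : t₁ ^ n * t₂ ^ n = B ^ n * C ^ n := by
      rw [← mul_pow, h2, mul_pow]
    have hinv1 : (((-1:ℂ)) ^ (n+1))⁻¹ = ((-1:ℂ)) ^ (n+1) := by
      rcases Nat.even_or_odd (n+1) with he | ho
      · rw [he.neg_one_pow]; norm_num
      · rw [ho.neg_one_pow]; norm_num
    rw [hinv1, pow_succ, neg_pow]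
    generalize hE : ((-1:ℂ)) ^ n = ε
    have hε : ε * ε = 1 := by
      rw [← hE, ← pow_add, ← two_mul, pow_mul]; norm_num
    rw [div_pow, div_pow]
    field_simp
    linear_combination
      (-(ε*ε+1)*(t₁^n*t₂^n - t₁^n*B^n - t₂^n*B^n + B^n*B^n)) * hε
      + (-1 : ℂ) * hpow

/-- `D_R = D_S − c^n 𝔖`, i.e.
`∏_j (1 + cρ_j) = ∏_j (1 + cσ_j) − c^n ∏_j σ_j` for every `c ∈ ℝ` and `x, y ∈ ℝ²`. -/
theorem prod_rot_eq_prod_refl_sub (n : ℕ) (hn : 3 ≤ n) (c : ℝ) (x y : ℝ × ℝ) :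
    ∏ j ∈ Finset.range n, (1 + c * rhoJ n j x y) =
      (∏ j ∈ Finset.range n, (1 + c * sigmaJ n j x y))
        - c ^ n * ∏ j ∈ Finset.range n, sigmaJ n j x y := by
  have hn' : 0 < n := by omega
  have hnR : (n : ℝ) ≠ 0 := Nat.cast_ne_zero.mpr (by omega)
  have hI := Complex.I_sq
  set ζ : ℂ := Complex.exp (2 * Real.pi * Complex.I / n) with hζdef
  have hζ : IsPrimitiveRoot ζ n := Complex.isPrimitiveRoot_exp n (by omega)
  have hcs : ∀ j : ℕ, ζ ^ j
      = (Real.cos (2 * Real.pi * j / n) : ℂ) + (Real.sin (2 * Real.pi * j / n) : ℝ) * Complex.I := by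
    intro j
    rw [hζdef, ← Complex.exp_nat_mul]
    rw [show (j : ℂ) * (2 * Real.pi * Complex.I / n)
        = ((2 * Real.pi * j / n : ℝ) : ℂ) * Complex.I by push_cast; field_simp]
    rw [Complex.exp_mul_I, ← Complex.ofReal_cos, ← Complex.ofReal_sin]
  have hmul1 : ∀ j : ℕ,
      ((Real.cos (2 * Real.pi * j / n) : ℂ) + (Real.sin (2 * Real.pi * j / n) : ℝ) * Complex.I)
      * ((Real.cos (2 * Real.pi * j / n) : ℂ) - (Real.sin (2 * Real.pi * j / n) : ℝ) * Complex.I)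
      = 1 := by
    intro j
    have hpy := Real.sin_sq_add_cos_sq (2 * Real.pi * j / n)
    have hc : ((Real.sin (2 * Real.pi * j / n) : ℂ)) ^ 2
        + ((Real.cos (2 * Real.pi * j / n) : ℂ)) ^ 2 = 1 := by exact_mod_cast hpy
    linear_combination hc - ((Real.sin (2 * Real.pi * j / n) : ℂ)) ^ 2 * hI
  have hcsi : ∀ j : ℕ, (ζ ^ j)⁻¹
      = (Real.cos (2 * Real.pi * j / n) : ℂ) - (Real.sin (2 * Real.pi * j / n) : ℝ) * Complex.I := by
    intro j
    rw [hcs j]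
    exact inv_eq_of_mul_eq_one_right (hmul1 j)
  set p : ℝ := x.1 * y.1 + x.2 * y.2 with hp
  set q : ℝ := x.1 * y.2 - x.2 * y.1 with hq
  set r : ℝ := x.1 * y.1 - x.2 * y.2 with hr
  set s : ℝ := x.1 * y.2 + x.2 * y.1 with hs
  set A : ℂ := 1 + c * p with hA
  set B : ℂ := c * (p + q * Complex.I) / 2 with hB
  set C : ℂ := c * (p - q * Complex.I) / 2 with hC
  set B' : ℂ := -(c * ((r : ℂ) + s * Complex.I)) / 2 with hB'
  set C' : ℂ := -(c * ((r : ℂ) - s * Complex.I)) / 2 with hC'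
  have factρ : ∀ j : ℕ, (1 + (c : ℂ) * (rhoJ n j x y : ℝ))
      = A - B * ζ ^ j - C * (ζ ^ j)⁻¹ := by
    intro j
    rw [hcsi j, hcs j, hA, hB, hC, hp, hq]
    simp only [rhoJ, dot2, rotMap, Prod.fst_sub, Prod.snd_sub]
    push_cast [-Complex.ofReal_sin, -Complex.ofReal_cos]
    linear_combination ((c : ℂ) * ((x.1:ℂ) * y.2 - (x.2:ℂ) * y.1)
      * (Real.sin (2 * Real.pi * j / n) : ℂ)) * hI
  have factσ : ∀ j : ℕ, (1 + (c : ℂ) * (sigmaJ n j x y : ℝ))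
      = A - B' * ζ ^ j - C' * (ζ ^ j)⁻¹ := by
    intro j
    rw [hcsi j, hcs j, hA, hB', hC', hp, hr, hs]
    simp only [sigmaJ, dot2, reflMap, Prod.fst_sub, Prod.snd_sub]
    push_cast [-Complex.ofReal_sin, -Complex.ofReal_cos]
    linear_combination (-(c : ℂ) * ((x.1:ℂ) * y.2 + (x.2:ℂ) * y.1)
      * (Real.sin (2 * Real.pi * j / n) : ℂ)) * hI
  have hBplusC : A - 1 = B + C := by rw [hA, hB, hC]; ring
  have factcσ : ∀ j : ℕ, ((c : ℂ) * (sigmaJ n j x y : ℝ))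
      = (B + C) - B' * ζ ^ j - C' * (ζ ^ j)⁻¹ := by
    intro j
    have h := factσ j
    rw [← hBplusC]
    linear_combination h
  have hBC : B * C = B' * C' := by
    rw [hB, hC, hB', hC', hp, hq, hr, hs]
    push_cast
    linear_combination ((c:ℂ)^2 * (x.1:ℂ) * (x.2:ℂ) * (y.1:ℂ) * (y.2:ℂ)) * hI
  obtain ⟨d, hd⟩ := IsAlgClosed.exists_pow_nat_eq (A ^ 2 - 4 * (B * C)) (show 0 < 2 by norm_num)
  have h1 : (A + d) / 2 + (A - d) / 2 = A := by ring
  have h2 : (A + d) / 2 * ((A - d) / 2) = B * C := by linear_combination (-(1:ℂ)/4) * hd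
  have Pρ := key_prod_aux hn' hζ A B C _ _ h1 h2
  have Pσ := key_prod_aux hn' hζ A B' C' _ _ h1 (h2.trans hBC)
  have Pc := key_prod_aux hn' hζ (B + C) B' C' B C rfl hBC
  rw [← Complex.ofReal_inj]
  push_cast [Complex.ofReal_prod]
  calc ∏ j ∈ Finset.range n, (1 + (c:ℂ) * (rhoJ n j x y : ℝ))
      = ∏ j ∈ Finset.range n, (A - B * ζ ^ j - C * (ζ ^ j)⁻¹) :=
        Finset.prod_congr rfl fun j _ => factρ j
    _ = ((A + d) / 2) ^ n + ((A - d) / 2) ^ n - B ^ n - C ^ n := Pρ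
    _ = (((A + d) / 2) ^ n + ((A - d) / 2) ^ n - B' ^ n - C' ^ n)
        - (B ^ n + C ^ n - B' ^ n - C' ^ n) := by ring
    _ = (∏ j ∈ Finset.range n, (1 + (c:ℂ) * (sigmaJ n j x y : ℝ)))
        - (c:ℂ) ^ n * ∏ j ∈ Finset.range n, ((sigmaJ n j x y : ℝ) : ℂ) := by
        rw [show ((c:ℂ)) ^ n * ∏ j ∈ Finset.range n, ((sigmaJ n j x y : ℝ) : ℂ)
            = ∏ j ∈ Finset.range n, ((c:ℂ) * (sigmaJ n j x y : ℝ)) by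
              rw [Finset.prod_mul_distrib, Finset.prod_const, Finset.card_range],
          Finset.prod_congr rfl fun j _ => factcσ j,
          Finset.prod_congr rfl fun j _ => factσ j, Pσ, Pc]
end
end

section
/- For every c ∈ ℝ and all x, y ∈ ℝ², one has ∑_{j∈ℤ/nℤ} ∏_{k∈ℤ/nℤ, k≠j} (1 + c·ρ_k(x,y)) = ∑_{j∈ℤ/nℤ} ∏_{k∈ℤ/nℤ, k≠j} (1 + c·σ_k(x,y)); equivalently, whenever all factors are nonzero, D_R·𝔇_R = D_S·𝔇_S. -/
open Real Finset

noncomputable section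

/-! ### Auxiliary lemmas -/

section Aux

open Complex Polynomial

lemma aux_prod_u_sub {n : ℕ} (hn : 0 < n) {ζ : ℂ} (hζ : IsPrimitiveRoot ζ n) (u : ℂ) :
    ∏ k ∈ Finset.range n, (u - ζ ^ k) = u ^ n - 1 := by
  have h := X_pow_sub_C_eq_prod hζ hn (one_pow n)
  have h2 := congrArg (Polynomial.eval u) h
  simp only [eval_sub, eval_pow, eval_X, eval_C, eval_prod, mul_one] at h2
  exact h2.symm

lemma aux_prod_sub_u {n : ℕ} (hn : 0 < n) {ζ : ℂ} (hζ : IsPrimitiveRoot ζ n) (u : ℂ) :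
    ∏ k ∈ Finset.range n, (ζ ^ k - u) = (-1 : ℂ) ^ n * (u ^ n - 1) := by
  calc ∏ k ∈ Finset.range n, (ζ ^ k - u) = ∏ k ∈ Finset.range n, (-1) * (u - ζ ^ k) := by
        apply Finset.prod_congr rfl; intro k _; ring
    _ = (-1 : ℂ) ^ n * (u ^ n - 1) := by
        rw [Finset.prod_mul_distrib, Finset.prod_const, Finset.card_range, aux_prod_u_sub hn hζ u]

lemma aux_prod_omega (n : ℕ) (hn : 0 < n) :
    ∏ k ∈ Finset.range n, Complex.exp (2 * Real.pi * Complex.I / n) ^ k = (-1 : ℂ) ^ (n - 1) := by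
  rw [Finset.prod_pow_eq_pow_sum]
  have hsum : (∑ k ∈ Finset.range n, k) * 2 = n * (n - 1) := Finset.sum_range_id_mul_two n
  rw [← Complex.exp_nat_mul]
  have hne : (n : ℂ) ≠ 0 := Nat.cast_ne_zero.mpr hn.ne'
  have hc : ((∑ k ∈ Finset.range n, k : ℕ) : ℂ) * 2 = (n : ℂ) * ((n - 1 : ℕ) : ℂ) := by
    exact_mod_cast congrArg (Nat.cast : ℕ → ℂ) hsum
  have harg : (↑(∑ k ∈ Finset.range n, k) : ℂ) * (2 * Real.pi * Complex.I / n)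
      = (n - 1 : ℕ) * (Real.pi * Complex.I) := by
    field_simp
    push_cast [Nat.cast_sub hn] at hc ⊢
    linear_combination hc
  rw [harg, Complex.exp_nat_mul, Complex.exp_pi_mul_I]

lemma aux_neg_pow_cancel (n : ℕ) (hn : 0 < n) : (-1 : ℂ) ^ (n - 1) * (-1) ^ n = -1 := by
  rw [← pow_add]
  have h : n - 1 + n = 2 * (n - 1) + 1 := by omega
  rw [h, pow_succ, pow_mul]
  norm_num

lemma aux_exists_vieta (t m : ℂ) : ∃ α β : ℂ, α + β = -t ∧ α * β = m := by
  obtain ⟨α, hα⟩ := IsAlgClosed.exists_root (k := ℂ) (X ^ 2 + C t * X + C m) (by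
    have hd : (X ^ 2 + C t * X + C m : ℂ[X]).degree = 2 := by compute_degree!
    rw [hd]; norm_num)
  refine ⟨α, -t - α, by ring, ?_⟩
  have h0 : α ^ 2 + t * α + m = 0 := by simpa [Polynomial.IsRoot] using hα
  linear_combination -h0

lemma aux_key_prod (n : ℕ) (hn : 0 < n) (t μ α β : ℂ) (hs : α + β = -t)
    (hp : α * β = μ * (starRingEnd ℂ) μ) :
    ∏ k ∈ Finset.range n,
        (t + μ * Complex.exp (2 * Real.pi * Complex.I / n) ^ k
           + (starRingEnd ℂ) μ * (Complex.exp (2 * Real.pi * Complex.I / n) ^ k)⁻¹)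
      = (-1 : ℂ) ^ (n - 1) * (μ ^ n + ((starRingEnd ℂ) μ) ^ n - α ^ n - β ^ n) := by
  set ω : ℂ := Complex.exp (2 * Real.pi * Complex.I / n) with hω
  have hωprim : IsPrimitiveRoot ω n := Complex.isPrimitiveRoot_exp n hn.ne'
  have hnc := aux_neg_pow_cancel n hn
  by_cases hμ : μ = 0
  · subst hμ
    simp only [map_zero, zero_mul, add_zero, zero_add]
    rw [Finset.prod_const, Finset.card_range]
    rcases (by simpa using hp : α = 0 ∨ β = 0) with h | h
    · have hβ : β = -t := by linear_combination hs - h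
      subst hβ
      rw [h, zero_pow hn.ne', neg_pow]
      linear_combination (t^n)*hnc
    · have hα : α = -t := by linear_combination hs - h
      subst hα
      rw [h, zero_pow hn.ne', neg_pow]
      linear_combination (t^n)*hnc
  · have hfac : ∀ k ∈ Finset.range n,
        t + μ * ω ^ k + (starRingEnd ℂ) μ * (ω ^ k)⁻¹
          = μ * (ω ^ k)⁻¹ * ((ω ^ k - α / μ) * (ω ^ k - β / μ)) := by
      intro k _
      have hz : ω ^ k ≠ 0 := pow_ne_zero k (Complex.exp_ne_zero _)
      field_simp [hμ, hz]
      ring_nf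
      linear_combination (μ*ω^k)*hs - hp
    rw [Finset.prod_congr rfl hfac]
    have hsplit : ∏ k ∈ Finset.range n, (μ * (ω ^ k)⁻¹ * ((ω ^ k - α / μ) * (ω ^ k - β / μ)))
        = (∏ _k ∈ Finset.range n, μ) * (∏ k ∈ Finset.range n, (ω ^ k)⁻¹)
          * ((∏ k ∈ Finset.range n, (ω ^ k - α / μ)) * (∏ k ∈ Finset.range n, (ω ^ k - β / μ))) := by
      rw [← Finset.prod_mul_distrib, ← Finset.prod_mul_distrib, ← Finset.prod_mul_distrib]
    rw [hsplit, Finset.prod_const, Finset.card_range, Finset.prod_inv_distrib,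
      aux_prod_omega n hn, aux_prod_sub_u hn hωprim, aux_prod_sub_u hn hωprim]
    have hμn : (μ : ℂ) ^ n ≠ 0 := pow_ne_zero n hμ
    have hpn : α ^ n * β ^ n = μ ^ n * ((starRingEnd ℂ) μ) ^ n := by
      have := congrArg (· ^ n) hp
      simpa [mul_pow] using this
    have hsq : ((-1:ℂ) ^ n) * ((-1:ℂ) ^ n) = 1 := by
      rw [← pow_add]; simp [pow_add, ← two_mul, pow_mul]
    have hinv : ((-1 : ℂ) ^ (n - 1))⁻¹ = (-1 : ℂ) ^ (n - 1) := by
      rw [← inv_pow]; norm_num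
    rw [hinv, div_pow, div_pow]
    field_simp
    ring_nf
    ring_nf at hpn hsq hnc
    rw [hsq] at *
    linear_combination hpn

lemma aux_omega_pow (n k : ℕ) (hn : n ≠ 0) :
    Complex.exp (2 * Real.pi * Complex.I / n) ^ k
      = Complex.cos (2 * Real.pi * k / n : ℝ) + Complex.sin (2 * Real.pi * k / n : ℝ) * Complex.I := by
  rw [← Complex.exp_nat_mul, ← Complex.exp_mul_I]
  congr 1
  have hne : (n : ℂ) ≠ 0 := Nat.cast_ne_zero.mpr hn
  push_cast
  field_simp

lemma aux_omega_pow_inv (n k : ℕ) (hn : n ≠ 0) :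
    (Complex.exp (2 * Real.pi * Complex.I / n) ^ k)⁻¹
      = Complex.cos (2 * Real.pi * k / n : ℝ) - Complex.sin (2 * Real.pi * k / n : ℝ) * Complex.I := by
  have hne : (n : ℂ) ≠ 0 := Nat.cast_ne_zero.mpr hn
  have h : -((k : ℂ) * (2 * Real.pi * Complex.I / n)) = ((-(2 * Real.pi * k / n) : ℝ) : ℂ) * Complex.I := by
    have : ((k:ℂ)) * (2 * Real.pi * Complex.I) = 2 * Real.pi * k * Complex.I := by ring
    push_cast
    field_simp
  rw [← Complex.exp_nat_mul, ← Complex.exp_neg, h, Complex.exp_mul_I, Complex.ofReal_neg,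
    Complex.cos_neg, Complex.sin_neg]
  ring

lemma aux_real_term (n k : ℕ) (hn : n ≠ 0) (a p q : ℝ) :
    ((a + p * Real.cos (2 * Real.pi * k / n) + q * Real.sin (2 * Real.pi * k / n) : ℝ) : ℂ)
      = (a : ℂ) + (((p : ℂ) - q * Complex.I) / 2) * Complex.exp (2 * Real.pi * Complex.I / n) ^ k
        + (starRingEnd ℂ) (((p : ℂ) - q * Complex.I) / 2)
            * (Complex.exp (2 * Real.pi * Complex.I / n) ^ k)⁻¹ := by
  rw [aux_omega_pow_inv n k hn, aux_omega_pow n k hn]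
  have hconj : (starRingEnd ℂ) (((p : ℂ) - q * Complex.I) / 2) = ((p : ℂ) + q * Complex.I) / 2 := by
    simp only [map_div₀, map_sub, map_mul, Complex.conj_ofReal, Complex.conj_I, map_ofNat]
    ring
  rw [hconj]
  push_cast [Complex.ofReal_cos, Complex.ofReal_sin]
  linear_combination (↑q * Complex.sin (2 * Real.pi * k / n : ℂ)) * Complex.I_sq

/-- The full product `∏ (a + p cos θ_k + q sin θ_k)`, as a complex number. -/
lemma aux_real_prod (n : ℕ) (hn : 0 < n) (a p q : ℝ) (α β : ℂ)
    (hs : α + β = -(a : ℂ)) (hp : α * β = (((p^2 + q^2)/4 : ℝ) : ℂ)) :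
    ((∏ k ∈ Finset.range n,
        (a + p * Real.cos (2 * Real.pi * k / n) + q * Real.sin (2 * Real.pi * k / n)) : ℝ) : ℂ)
      = (-1 : ℂ) ^ (n - 1) * ((((p : ℂ) - q * Complex.I) / 2) ^ n
          + ((starRingEnd ℂ) (((p : ℂ) - q * Complex.I) / 2)) ^ n - α ^ n - β ^ n) := by
  have hμ : (((p : ℂ) - q * Complex.I) / 2) * (starRingEnd ℂ) (((p : ℂ) - q * Complex.I) / 2)
      = (((p^2 + q^2)/4 : ℝ) : ℂ) := by
    simp only [map_div₀, map_sub, map_mul, Complex.conj_ofReal, Complex.conj_I, map_ofNat]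
    push_cast
    linear_combination (-(q:ℂ)^2/4) * Complex.I_sq
  push_cast [Complex.ofReal_prod]
  rw [Finset.prod_congr rfl (fun k _ => by
    have := aux_real_term n k hn.ne' a p q
    push_cast at this
    exact this)]
  rw [aux_key_prod n hn a _ α β hs (by rw [hμ]; exact_mod_cast hp)]

/-- The sum `∑_j ∏_{k ≠ j}` depends only on `a` and `p² + q²`. -/
lemma aux_sum_indep (n : ℕ) (hn : 0 < n) (a p q p' q' : ℝ)
    (hpq : p^2 + q^2 = p'^2 + q'^2) :
    ∑ j ∈ Finset.range n, ∏ k ∈ (Finset.range n).erase j,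
        (a + p * Real.cos (2 * Real.pi * k / n) + q * Real.sin (2 * Real.pi * k / n))
      = ∑ j ∈ Finset.range n, ∏ k ∈ (Finset.range n).erase j,
        (a + p' * Real.cos (2 * Real.pi * k / n) + q' * Real.sin (2 * Real.pi * k / n)) := by
  set F : ℝ → ℝ := fun t => ∏ k ∈ Finset.range n,
      (t + p * Real.cos (2 * Real.pi * k / n) + q * Real.sin (2 * Real.pi * k / n)) with hF
  set G : ℝ → ℝ := fun t => ∏ k ∈ Finset.range n,
      (t + p' * Real.cos (2 * Real.pi * k / n) + q' * Real.sin (2 * Real.pi * k / n)) with hG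
  -- The difference F - G is constant.
  have hdiff : ∀ t : ℝ, F t - G t = F 0 - G 0 := by
    have key : ∀ t : ℝ, ((F t - G t : ℝ) : ℂ)
        = (-1 : ℂ) ^ (n - 1) * ((((p : ℂ) - q * Complex.I) / 2) ^ n
            + ((starRingEnd ℂ) (((p : ℂ) - q * Complex.I) / 2)) ^ n
            - (((p' : ℂ) - q' * Complex.I) / 2) ^ n
            - ((starRingEnd ℂ) (((p' : ℂ) - q' * Complex.I) / 2)) ^ n) := by
      intro t
      obtain ⟨α, β, hs, hm⟩ := aux_exists_vieta (t : ℂ) (((p^2 + q^2)/4 : ℝ) : ℂ)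
      have h1 := aux_real_prod n hn t p q α β hs hm
      have h2 := aux_real_prod n hn t p' q' α β hs (by rw [hm]; norm_cast; rw [hpq])
      push_cast
      rw [hF, hG]
      push_cast at h1 h2 ⊢
      rw [h1, h2]
      ring
    intro t
    have := (key t).trans (key 0).symm
    exact_mod_cast this
  -- Both sums are the derivative of F at a.
  have hder : ∀ (r s : ℝ), HasDerivAt (fun t => ∏ k ∈ Finset.range n,
      (t + r * Real.cos (2 * Real.pi * k / n) + s * Real.sin (2 * Real.pi * k / n)))
      (∑ j ∈ Finset.range n, ∏ k ∈ (Finset.range n).erase j,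
        (a + r * Real.cos (2 * Real.pi * k / n) + s * Real.sin (2 * Real.pi * k / n))) a := by
    intro r s
    have h := HasDerivAt.fun_finsetProd (u := Finset.range n)
      (f := fun k t => t + r * Real.cos (2 * Real.pi * k / n) + s * Real.sin (2 * Real.pi * k / n))
      (f' := fun _ => (1 : ℝ)) (x := a)
      (fun k _ => by
        simpa using ((hasDerivAt_id a).add_const
          (r * Real.cos (2 * Real.pi * k / n))).add_const (s * Real.sin (2 * Real.pi * k / n)))
    simpa [smul_eq_mul] using h
  have h1 : HasDerivAt F (∑ j ∈ Finset.range n, ∏ k ∈ (Finset.range n).erase j,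
      (a + p * Real.cos (2 * Real.pi * k / n) + q * Real.sin (2 * Real.pi * k / n))) a := hder p q
  have h2 : HasDerivAt G (∑ j ∈ Finset.range n, ∏ k ∈ (Finset.range n).erase j,
      (a + p' * Real.cos (2 * Real.pi * k / n) + q' * Real.sin (2 * Real.pi * k / n))) a := hder p' q'
  have hFG : F = fun t => G t + (F 0 - G 0) := by
    funext t
    have := hdiff t
    linarith
  have h1' : HasDerivAt F (∑ j ∈ Finset.range n, ∏ k ∈ (Finset.range n).erase j,
      (a + p' * Real.cos (2 * Real.pi * k / n) + q' * Real.sin (2 * Real.pi * k / n))) a := by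
    rw [hFG]
    exact h2.add_const _
  exact h1.unique h1'

end Aux

/-- `D_R 𝔇_R = D_S 𝔇_S`, in the polynomial form
`∑_j ∏_{k≠j} (1 + cρ_k) = ∑_j ∏_{k≠j} (1 + cσ_k)` for every `c ∈ ℝ` and `x, y ∈ ℝ²`. -/
theorem sum_prod_rot_eq_sum_prod_refl (n : ℕ) (hn : 3 ≤ n) (c : ℝ) (x y : ℝ × ℝ) :
    ∑ j ∈ Finset.range n, ∏ k ∈ (Finset.range n).erase j, (1 + c * rhoJ n k x y) =
      ∑ j ∈ Finset.range n, ∏ k ∈ (Finset.range n).erase j, (1 + c * sigmaJ n k x y) := by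
  have hn0 : 0 < n := by omega
  have hrho : ∀ k : ℕ, 1 + c * rhoJ n k x y
      = (1 + c * (x.1*y.1 + x.2*y.2))
        + (-(c * (x.1*y.1 + x.2*y.2))) * Real.cos (2 * Real.pi * k / n)
        + (c * (x.1*y.2 - x.2*y.1)) * Real.sin (2 * Real.pi * k / n) := by
    intro k
    simp only [rhoJ, dot2, rotMap, Prod.fst_sub, Prod.snd_sub]
    push_cast
    ring
  have hsigma : ∀ k : ℕ, 1 + c * sigmaJ n k x y
      = (1 + c * (x.1*y.1 + x.2*y.2))
        + (c * (x.1*y.1 - x.2*y.2)) * Real.cos (2 * Real.pi * k / n)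
        + (-(c * (x.1*y.2 + x.2*y.1))) * Real.sin (2 * Real.pi * k / n) := by
    intro k
    simp only [sigmaJ, dot2, reflMap, Prod.fst_sub, Prod.snd_sub]
    push_cast
    ring
  calc ∑ j ∈ Finset.range n, ∏ k ∈ (Finset.range n).erase j, (1 + c * rhoJ n k x y)
      = ∑ j ∈ Finset.range n, ∏ k ∈ (Finset.range n).erase j,
          ((1 + c * (x.1*y.1 + x.2*y.2))
            + (-(c * (x.1*y.1 + x.2*y.2))) * Real.cos (2 * Real.pi * k / n)
            + (c * (x.1*y.2 - x.2*y.1)) * Real.sin (2 * Real.pi * k / n)) := by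
        exact Finset.sum_congr rfl fun j _ => Finset.prod_congr rfl fun k _ => hrho k
    _ = ∑ j ∈ Finset.range n, ∏ k ∈ (Finset.range n).erase j,
          ((1 + c * (x.1*y.1 + x.2*y.2))
            + (c * (x.1*y.1 - x.2*y.2)) * Real.cos (2 * Real.pi * k / n)
            + (-(c * (x.1*y.2 + x.2*y.1))) * Real.sin (2 * Real.pi * k / n)) := by
        apply aux_sum_indep n hn0
        ring
    _ = ∑ j ∈ Finset.range n, ∏ k ∈ (Finset.range n).erase j, (1 + c * sigmaJ n k x y) := by
        exact Finset.sum_congr rfl fun j _ => Finset.prod_congr rfl fun k _ => (hsigma k).symm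
end
end

section
/- Let c > 0, j ∈ ℤ/nℤ with j ≠ 0, and x, y in the closed Weyl chamber C̄. Define Ã_j = ∑_{k∈ℤ/nℤ} c·σ_k/D_{s_k} − ∑_{k∈ℤ/nℤ, k≠j} c·ρ_k/D_{r_k} and B̃_j = (D_{r_j}·D_S/D_R − 1)·𝔇_S. Then Ã_j = c·ρ_j/D_{r_j} + (c^n·𝔖/D_S)·𝔇_R, B̃_j = c·ρ_j·𝔇_R + (c^n·𝔖/D_S)·𝔇_R, and 1 ≤ 𝔇_R ≤ n. -/
open Real Finset

noncomputable section

section AuxLemmas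
open Complex Polynomial

lemma aux_prod_lin {n : ℕ} {ζ : ℂ} (hζ : IsPrimitiveRoot ζ n) (hn : 0 < n) (T W : ℂ) :
    ∏ k ∈ range n, (T - W * ζ ^ k) = T ^ n - W ^ n := by
  have h := X_pow_sub_C_eq_prod hζ hn (rfl : W ^ n = W ^ n)
  have h2 := congrArg (Polynomial.eval T) h
  simp only [eval_sub, eval_pow, eval_X, eval_C, eval_prod] at h2
  rw [h2]
  exact Finset.prod_congr rfl fun k _ => by ring

lemma aux_prod_eval {n : ℕ} (hn : 0 < n) (s : ℝ) (W T : ℂ)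
    (hT : T ^ 2 - 2 * s * T + (Complex.normSq W : ℂ) = 0) (hT0 : T ≠ 0) :
    (2 * T) ^ n * ((∏ k ∈ range n, (s - (W * Complex.exp (2 * π * Complex.I / n) ^ k).re) : ℝ) : ℂ)
      = (T ^ n - W ^ n) * (T ^ n - (starRingEnd ℂ) W ^ n) := by
  set ζ : ℂ := Complex.exp (2 * π * Complex.I / n) with hζdef
  have hprim : IsPrimitiveRoot ζ n := Complex.isPrimitiveRoot_exp n hn.ne'
  have harg : (starRingEnd ℂ) (2 * (π:ℂ) * Complex.I / n) = -(2 * (π:ℂ) * Complex.I / n) := by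
    simp [map_div₀, Complex.conj_I, map_ofNat]
    ring
  have hconj : (starRingEnd ℂ) ζ = ζ⁻¹ := by
    rw [hζdef, ← Complex.exp_conj, harg, Complex.exp_neg]
  have hprim' : IsPrimitiveRoot ((starRingEnd ℂ) ζ) n := by rw [hconj]; exact hprim.inv
  have hunit : ζ * (starRingEnd ℂ) ζ = 1 := by
    rw [hconj]
    exact mul_inv_cancel₀ (hprim.ne_zero hn.ne')
  push_cast [Complex.ofReal_prod]
  rw [show ((2:ℂ) * T) ^ n = ∏ _k ∈ range n, (2 * T) from by rw [prod_const, card_range],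
    ← Finset.prod_mul_distrib]
  have key : ∀ k ∈ range n,
      (2 * T) * ((s : ℂ) - ((W * ζ ^ k).re : ℂ)) =
        (T - W * ζ ^ k) * (T - (starRingEnd ℂ) W * ((starRingEnd ℂ) ζ) ^ k) := by
    intro k _
    have hre : (((W * ζ ^ k).re : ℝ) : ℂ) = (W * ζ ^ k + (starRingEnd ℂ) (W * ζ ^ k)) / 2 := by
      rw [Complex.add_conj]; push_cast; ring
    have h1 : ζ ^ k * ((starRingEnd ℂ) ζ) ^ k = 1 := by
      rw [← mul_pow, hunit, one_pow]
    have h2 : W * (starRingEnd ℂ) W = (Complex.normSq W : ℂ) := Complex.mul_conj W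
    rw [hre, map_mul, map_pow]
    linear_combination (-1 : ℂ) * hT - (W * (starRingEnd ℂ) W) * h1 - h2
  rw [Finset.prod_congr rfl key, Finset.prod_mul_distrib, aux_prod_lin hprim hn T W,
    aux_prod_lin hprim' hn T ((starRingEnd ℂ) W)]

lemma aux_prod_diff {n : ℕ} (hn : 0 < n) (s : ℝ) (W W' : ℂ)
    (hN : Complex.normSq W = Complex.normSq W') :
    (∏ k ∈ range n, (s - (W * Complex.exp (2 * π * Complex.I / n) ^ k).re))
      - (∏ k ∈ range n, (s - (W' * Complex.exp (2 * π * Complex.I / n) ^ k).re))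
      = (((W' ^ n).re - (W ^ n).re) * 2 / 2 ^ n : ℝ) := by
  by_cases hW : W = 0
  · have hW' : W' = 0 := by
      rw [← Complex.normSq_eq_zero, ← hN, hW, Complex.normSq_zero]
    simp [hW, hW', zero_pow hn.ne']
  · obtain ⟨T', hT'⟩ := IsAlgClosed.exists_pow_nat_eq ((s:ℂ) ^ 2 - (Complex.normSq W : ℂ))
      (by norm_num : 0 < 2)
    set T : ℂ := s + T' with hTdef
    have hT : T ^ 2 - 2 * s * T + (Complex.normSq W : ℂ) = 0 := by
      rw [hTdef]; linear_combination hT'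
    have hT0 : T ≠ 0 := by
      intro h
      rw [h] at hT
      simp only [ne_eq, zero_pow, mul_zero, sub_zero, zero_add] at hT
      norm_num at hT
      exact hW hT
    have e1 := aux_prod_eval hn s W T hT hT0
    have e2 := aux_prod_eval hn s W' T (by rwa [hN] at hT) hT0
    have h2T : (2 * T) ^ n ≠ 0 := pow_ne_zero _ (by simp [hT0])
    have h2n : ((2:ℂ)) ^ n ≠ 0 := by norm_num
    have hW1 : (W:ℂ) ^ n + (starRingEnd ℂ) W ^ n = 2 * ((W ^ n).re : ℂ) := by
      rw [← map_pow, Complex.add_conj]; push_cast; ring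
    have hW2 : (W':ℂ) ^ n + (starRingEnd ℂ) W' ^ n = 2 * ((W' ^ n).re : ℂ) := by
      rw [← map_pow, Complex.add_conj]; push_cast; ring
    have hWN : W ^ n * (starRingEnd ℂ) W ^ n = ((Complex.normSq W : ℝ) : ℂ) ^ n := by
      rw [← mul_pow, Complex.mul_conj]
    have hWN' : W' ^ n * (starRingEnd ℂ) W' ^ n = ((Complex.normSq W : ℝ) : ℂ) ^ n := by
      rw [← mul_pow, Complex.mul_conj, hN]
    have hexp : ((2:ℂ) * T) ^ n = 2 ^ n * T ^ n := by rw [mul_pow]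
    have hP1 : ((∏ k ∈ range n, (s - (W * Complex.exp (2 * π * Complex.I / n) ^ k).re) : ℝ) : ℂ)
        = (T ^ n - W ^ n) * (T ^ n - (starRingEnd ℂ) W ^ n) / (2 * T) ^ n := by
      rw [eq_div_iff h2T]; linear_combination e1
    have hP2 : ((∏ k ∈ range n, (s - (W' * Complex.exp (2 * π * Complex.I / n) ^ k).re) : ℝ) : ℂ)
        = (T ^ n - W' ^ n) * (T ^ n - (starRingEnd ℂ) W' ^ n) / (2 * T) ^ n := by
      rw [eq_div_iff h2T]; linear_combination e2
    have hcast : (((∏ k ∈ range n, (s - (W * Complex.exp (2 * π * Complex.I / n) ^ k).re))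
        - (∏ k ∈ range n, (s - (W' * Complex.exp (2 * π * Complex.I / n) ^ k).re)) : ℝ) : ℂ)
        = ((((W' ^ n).re - (W ^ n).re) * 2 / 2 ^ n : ℝ) : ℂ) := by
      rw [Complex.ofReal_sub, hP1, hP2, Complex.ofReal_div, Complex.ofReal_mul,
        Complex.ofReal_sub, Complex.ofReal_pow, Complex.ofReal_ofNat, div_sub_div_same,
        div_eq_div_iff h2T h2n]
      push_cast
      linear_combination (2:ℂ)^n*T^n*hW2 - 2^n*T^n*hW1 + 2^n*hWN - 2^n*hWN'
        - 2*(((W'^n).re:ℂ) - ((W^n).re:ℂ))*hexp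
    exact_mod_cast hcast

lemma aux_exp_pow_eq (n k : ℕ) :
    Complex.exp (2 * π * Complex.I / n) ^ k
      = ((Real.cos (2*π*k/n) : ℝ) : ℂ) + ((Real.sin (2*π*k/n) : ℝ) : ℂ) * Complex.I := by
  rw [← Complex.exp_nat_mul,
    show (k:ℂ) * (2 * (π:ℂ) * Complex.I / n) = ((2*π*k/n : ℝ):ℂ) * Complex.I by push_cast; ring,
    Complex.exp_mul_I, Complex.ofReal_cos, Complex.ofReal_sin]

lemma aux_mul_exp_re (A B : ℝ) (n k : ℕ) :
    ((((A:ℝ):ℂ) + ((B:ℝ):ℂ) * Complex.I) * Complex.exp (2 * π * Complex.I / n) ^ k).re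
      = A * Real.cos (2*π*k/n) - B * Real.sin (2*π*k/n) := by
  rw [aux_exp_pow_eq]
  simp only [Complex.add_re, Complex.add_im, Complex.mul_re, Complex.mul_im,
    Complex.ofReal_re, Complex.ofReal_im, Complex.I_re, Complex.I_im]
  ring

end AuxLemmas

lemma aux_rho_formula (n : ℕ) (k : ℕ) (x y : ℝ × ℝ) :
    rhoJ n k x y = (x.1*y.1 + x.2*y.2) * (1 - Real.cos (2*π*k/n))
      + (x.1*y.2 - x.2*y.1) * Real.sin (2*π*k/n) := by
  simp only [rhoJ, dot2, rotMap, Prod.fst_sub, Prod.snd_sub]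
  push_cast
  ring

lemma aux_sigma_formula (n : ℕ) (k : ℕ) (x y : ℝ × ℝ) :
    sigmaJ n k x y = (x.1*y.1 + x.2*y.2) + (x.1*y.1 - x.2*y.2) * Real.cos (2*π*k/n)
      - (x.1*y.2 + x.2*y.1) * Real.sin (2*π*k/n) := by
  simp only [sigmaJ, dot2, reflMap, Prod.fst_sub, Prod.snd_sub]
  push_cast
  ring

lemma aux_cos_diff (A B : ℝ) : Real.cos (A - B) - Real.cos (A + B) = 2 * Real.sin A * Real.sin B := by
  rw [Real.cos_sub, Real.cos_add]; ring

lemma aux_chamber_coords {n : ℕ} (hn : 2 ≤ n) {x : ℝ × ℝ} (hx : x ∈ chamber n) :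
    ∃ a b : ℝ, 0 ≤ a ∧ 0 ≤ b ∧ x.1 = b * Real.sin (π/n) ∧ x.2 = a + b * Real.cos (π/n) := by
  obtain ⟨h1, h2⟩ := hx
  have hn0 : (0:ℝ) < n := by positivity
  have hn1 : (1:ℝ) < n := by exact_mod_cast lt_of_lt_of_le one_lt_two (by exact_mod_cast hn)
  have hs : 0 < Real.sin (π/n) :=
    Real.sin_pos_of_pos_of_lt_pi (by positivity) (by
      calc π/n < π/1 := by apply div_lt_div_of_pos_left pi_pos one_pos hn1
      _ = π := by ring)
  simp only [dot2, alphaRoot] at h1 h2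
  have e0 : π * ((0:ℤ):ℝ) / n = 0 := by norm_num
  have e1 : π * (((n:ℤ) - 1 : ℤ):ℝ) / n = π - π/n := by
    push_cast
    field_simp
  rw [e0] at h1
  rw [e1, Real.cos_pi_sub, Real.sin_pi_sub] at h2
  simp only [Real.cos_zero, Real.sin_zero, one_mul, zero_mul, add_zero] at h1
  refine ⟨x.2 - x.1 * Real.cos (π/n) / Real.sin (π/n), x.1 / Real.sin (π/n), ?_, ?_, ?_, ?_⟩
  · rw [sub_nonneg, div_le_iff₀ hs]
    nlinarith
  · exact div_nonneg h1 hs.le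
  · field_simp
  · field_simp
    ring

lemma aux_rho_nonneg {n : ℕ} (hn : 2 ≤ n) {k : ℕ} (hk : k < n) {x y : ℝ × ℝ}
    (hx : x ∈ chamber n) (hy : y ∈ chamber n) : 0 ≤ rhoJ n k x y := by
  obtain ⟨a, b, ha, hb, hx1, hx2⟩ := aux_chamber_coords hn hx
  obtain ⟨a', b', ha', hb', hy1, hy2⟩ := aux_chamber_coords hn hy
  have hn0 : (0:ℝ) < n := by positivity
  have hkn : (k:ℝ) ≤ n := by exact_mod_cast hk.le
  have hk1n : (k:ℝ) + 1 ≤ n := by exact_mod_cast hk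
  have hsc : Real.sin (π/n) ^ 2 + Real.cos (π/n) ^ 2 = 1 := Real.sin_sq_add_cos_sq _
  have hθ1 : 0 ≤ 1 - Real.cos (2*π*k/n) := by nlinarith [Real.cos_le_one (2*π*k/n)]
  have hsA : 0 ≤ Real.sin (π*k/n) := Real.sin_nonneg_of_nonneg_of_le_pi (by positivity)
    (by rw [div_le_iff₀ hn0]; exact mul_le_mul_of_nonneg_left hkn pi_pos.le)
  have hpk : π*(k:ℝ)/n ≤ π := by
    rw [div_le_iff₀ hn0]; exact mul_le_mul_of_nonneg_left hkn pi_pos.le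
  have hπn : (0:ℝ) ≤ π/n := by positivity
  have hK1 : 0 ≤ Real.cos (π/n) * (1 - Real.cos (2*π*k/n)) - Real.sin (π/n) * Real.sin (2*π*k/n) := by
    rcases Nat.eq_zero_or_pos k with h0 | h1
    · subst h0; simp
    · have K1 : Real.cos (π/n) * (1 - Real.cos (2*π*k/n)) - Real.sin (π/n) * Real.sin (2*π*k/n)
          = 2 * Real.sin (π*k/n) * Real.sin (π*k/n - π/n) := by
        have h := aux_cos_diff (π*k/n) (π*k/n - π/n)
        rw [show π*k/n - (π*k/n - π/n) = π/n by ring,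
            show π*k/n + (π*k/n - π/n) = 2*π*k/n - π/n by ring, Real.cos_sub] at h
        linear_combination h
      rw [K1]
      have h1' : (1:ℝ) ≤ k := by exact_mod_cast h1
      have hsB : 0 ≤ Real.sin (π*k/n - π/n) := Real.sin_nonneg_of_nonneg_of_le_pi
        (by
          rw [sub_nonneg, div_le_div_iff₀ hn0 hn0]
          nlinarith [mul_le_mul_of_nonneg_right (mul_le_mul_of_nonneg_left h1' pi_pos.le) hn0.le])
        (by linarith)
      positivity
  have hK2 : 0 ≤ Real.cos (π/n) * (1 - Real.cos (2*π*k/n)) + Real.sin (π/n) * Real.sin (2*π*k/n) := by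
    have K2 : Real.cos (π/n) * (1 - Real.cos (2*π*k/n)) + Real.sin (π/n) * Real.sin (2*π*k/n)
        = 2 * Real.sin (π*k/n + π/n) * Real.sin (π*k/n) := by
      have h := aux_cos_diff (π*k/n + π/n) (π*k/n)
      rw [show π*k/n + π/n - π*k/n = π/n by ring,
          show π*k/n + π/n + π*k/n = 2*π*k/n + π/n by ring, Real.cos_add] at h
      linear_combination h
    rw [K2]
    have hsB : 0 ≤ Real.sin (π*k/n + π/n) := Real.sin_nonneg_of_nonneg_of_le_pi
      (by positivity)
      (by
        rw [← add_div, div_le_iff₀ hn0]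
        nlinarith [mul_le_mul_of_nonneg_left hk1n pi_pos.le])
    positivity
  have formula : rhoJ n k x y = a*a'*(1 - Real.cos (2*π*k/n)) + b*b'*(1 - Real.cos (2*π*k/n))
      + a*b'*(Real.cos (π/n)*(1 - Real.cos (2*π*k/n)) - Real.sin (π/n)*Real.sin (2*π*k/n))
      + a'*b*(Real.cos (π/n)*(1 - Real.cos (2*π*k/n)) + Real.sin (π/n)*Real.sin (2*π*k/n)) := by
    rw [aux_rho_formula, hx1, hx2, hy1, hy2]
    linear_combination (b*b'*(1 - Real.cos (2*π*k/n))) * hsc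
  rw [formula]
  have t1 : 0 ≤ a*a'*(1 - Real.cos (2*π*k/n)) := by positivity
  have t2 : 0 ≤ b*b'*(1 - Real.cos (2*π*k/n)) := by positivity
  have t3 : 0 ≤ a*b'*(Real.cos (π/n)*(1 - Real.cos (2*π*k/n)) - Real.sin (π/n)*Real.sin (2*π*k/n)) :=
    mul_nonneg (mul_nonneg ha hb') hK1
  have t4 : 0 ≤ a'*b*(Real.cos (π/n)*(1 - Real.cos (2*π*k/n)) + Real.sin (π/n)*Real.sin (2*π*k/n)) :=
    mul_nonneg (mul_nonneg ha' hb) hK2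
  linarith

lemma aux_sigma_nonneg {n : ℕ} (hn : 2 ≤ n) {k : ℕ} (hk : k < n) {x y : ℝ × ℝ}
    (hx : x ∈ chamber n) (hy : y ∈ chamber n) : 0 ≤ sigmaJ n k x y := by
  obtain ⟨a, b, ha, hb, hx1, hx2⟩ := aux_chamber_coords hn hx
  obtain ⟨a', b', ha', hb', hy1, hy2⟩ := aux_chamber_coords hn hy
  have hn0 : (0:ℝ) < n := by positivity
  have hkn : (k:ℝ) ≤ n := by exact_mod_cast hk.le
  have hsc : Real.sin (π/n) ^ 2 + Real.cos (π/n) ^ 2 = 1 := Real.sin_sq_add_cos_sq _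
  have hθ1 : 0 ≤ 1 - Real.cos (2*π*k/n) := by nlinarith [Real.cos_le_one (2*π*k/n)]
  have hK1 : 0 ≤ Real.cos (π/n) * (1 - Real.cos (2*π*k/n)) - Real.sin (π/n) * Real.sin (2*π*k/n) := by
    rcases Nat.eq_zero_or_pos k with h0 | h1
    · subst h0; simp
    · have K1 : Real.cos (π/n) * (1 - Real.cos (2*π*k/n)) - Real.sin (π/n) * Real.sin (2*π*k/n)
          = 2 * Real.sin (π*k/n) * Real.sin (π*k/n - π/n) := by
        have h := aux_cos_diff (π*k/n) (π*k/n - π/n)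
        rw [show π*k/n - (π*k/n - π/n) = π/n by ring,
            show π*k/n + (π*k/n - π/n) = 2*π*k/n - π/n by ring, Real.cos_sub] at h
        linear_combination h
      rw [K1]
      have h1' : (1:ℝ) ≤ k := by exact_mod_cast h1
      have hsA : 0 ≤ Real.sin (π*k/n) := Real.sin_nonneg_of_nonneg_of_le_pi (by positivity)
        (by rw [div_le_iff₀ hn0]; exact mul_le_mul_of_nonneg_left hkn pi_pos.le)
      have hpk : π*(k:ℝ)/n ≤ π := by
        rw [div_le_iff₀ hn0]; exact mul_le_mul_of_nonneg_left hkn pi_pos.le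
      have hπn : (0:ℝ) ≤ π/n := by positivity
      have hsB : 0 ≤ Real.sin (π*k/n - π/n) := Real.sin_nonneg_of_nonneg_of_le_pi
        (by
          rw [sub_nonneg, div_le_div_iff₀ hn0 hn0]
          nlinarith [mul_le_mul_of_nonneg_right (mul_le_mul_of_nonneg_left h1' pi_pos.le) hn0.le])
        (by linarith)
      positivity
  have hKb : 0 ≤ 1 - (Real.cos (π/n)^2 - Real.sin (π/n)^2) * Real.cos (2*π*k/n)
      - 2 * Real.sin (π/n) * Real.cos (π/n) * Real.sin (2*π*k/n) := by
    have hc2 : Real.cos (π/n)^2 - Real.sin (π/n)^2 = Real.cos (2*(π/n)) := by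
      rw [Real.cos_two_mul]; linear_combination -hsc
    have hs2 : 2 * Real.sin (π/n) * Real.cos (π/n) = Real.sin (2*(π/n)) := by
      rw [Real.sin_two_mul]
    rw [hc2, hs2]
    have h := Real.cos_le_one (2*π*k/n - 2*(π/n))
    rw [Real.cos_sub] at h
    nlinarith
  have formula : sigmaJ n k x y = a*a'*(1 - Real.cos (2*π*k/n))
      + (a*b' + a'*b)*(Real.cos (π/n)*(1 - Real.cos (2*π*k/n)) - Real.sin (π/n)*Real.sin (2*π*k/n))
      + b*b'*(1 - (Real.cos (π/n)^2 - Real.sin (π/n)^2) * Real.cos (2*π*k/n)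
          - 2 * Real.sin (π/n) * Real.cos (π/n) * Real.sin (2*π*k/n)) := by
    rw [aux_sigma_formula, hx1, hx2, hy1, hy2]
    linear_combination (b*b') * hsc
  rw [formula]
  have t1 : 0 ≤ a*a'*(1 - Real.cos (2*π*k/n)) := by positivity
  have t3 : 0 ≤ (a*b' + a'*b)*(Real.cos (π/n)*(1 - Real.cos (2*π*k/n)) - Real.sin (π/n)*Real.sin (2*π*k/n)) :=
    mul_nonneg (by positivity) hK1
  have t4 : 0 ≤ b*b'*(1 - (Real.cos (π/n)^2 - Real.sin (π/n)^2) * Real.cos (2*π*k/n)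
      - 2 * Real.sin (π/n) * Real.cos (π/n) * Real.sin (2*π*k/n)) :=
    mul_nonneg (mul_nonneg hb hb') hKb
  linarith

/-- For `c > 0`, `j ≠ 0` and `x, y` in the closed Weyl chamber:
`Ã_j = ∑_k cσ_k/D_{s_k} − ∑_{k≠j} cρ_k/D_{r_k} = cρ_j/D_{r_j} + (c^n 𝔖/D_S) 𝔇_R`,
`B̃_j = (D_{r_j} D_S/D_R − 1) 𝔇_S = cρ_j 𝔇_R + (c^n 𝔖/D_S) 𝔇_R`, and `1 ≤ 𝔇_R ≤ n`. -/
theorem barrier_tilde_eq (n : ℕ) (hn : 3 ≤ n) (c : ℝ) (hc : 0 < c)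
    (j : ℕ) (hj0 : j ≠ 0) (hj : j < n)
    (x : ℝ × ℝ) (hx : x ∈ chamber n) (y : ℝ × ℝ) (hy : y ∈ chamber n) :
    (∑ k ∈ Finset.range n, c * sigmaJ n k x y / (1 + c * sigmaJ n k x y))
        - (∑ k ∈ (Finset.range n).erase j, c * rhoJ n k x y / (1 + c * rhoJ n k x y))
      = c * rhoJ n j x y / (1 + c * rhoJ n j x y)
        + c ^ n * (∏ k ∈ Finset.range n, sigmaJ n k x y) /
            (∏ k ∈ Finset.range n, (1 + c * sigmaJ n k x y)) *
          ∑ k ∈ Finset.range n, 1 / (1 + c * rhoJ n k x y) ∧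
    ((1 + c * rhoJ n j x y) * (∏ k ∈ Finset.range n, (1 + c * sigmaJ n k x y)) /
          (∏ k ∈ Finset.range n, (1 + c * rhoJ n k x y)) - 1) *
        (∑ k ∈ Finset.range n, 1 / (1 + c * sigmaJ n k x y))
      = c * rhoJ n j x y * (∑ k ∈ Finset.range n, 1 / (1 + c * rhoJ n k x y))
        + c ^ n * (∏ k ∈ Finset.range n, sigmaJ n k x y) /
            (∏ k ∈ Finset.range n, (1 + c * sigmaJ n k x y)) *
          ∑ k ∈ Finset.range n, 1 / (1 + c * rhoJ n k x y) ∧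
    1 ≤ (∑ k ∈ Finset.range n, 1 / (1 + c * rhoJ n k x y)) ∧
    (∑ k ∈ Finset.range n, 1 / (1 + c * rhoJ n k x y)) ≤ (n : ℝ) := by
  have hn2 : 2 ≤ n := by omega
  have hn' : 0 < n := by omega
  have hρnn : ∀ k ∈ Finset.range n, 0 ≤ rhoJ n k x y :=
    fun k hk => aux_rho_nonneg hn2 (Finset.mem_range.mp hk) hx hy
  have hσnn : ∀ k ∈ Finset.range n, 0 ≤ sigmaJ n k x y :=
    fun k hk => aux_sigma_nonneg hn2 (Finset.mem_range.mp hk) hx hy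
  have hR : ∀ k ∈ Finset.range n, 0 < 1 + c * rhoJ n k x y := fun k hk => by
    nlinarith [hρnn k hk]
  have hS : ∀ k ∈ Finset.range n, 0 < 1 + c * sigmaJ n k x y := fun k hk => by
    nlinarith [hσnn k hk]
  have hDR : 0 < ∏ k ∈ Finset.range n, (1 + c * rhoJ n k x y) := Finset.prod_pos hR
  have hDS : 0 < ∏ k ∈ Finset.range n, (1 + c * sigmaJ n k x y) := Finset.prod_pos hS
  -- the key product identity
  set u : ℝ := x.1*y.1 + x.2*y.2 with hu
  set Wr : ℂ := ((c*u : ℝ) : ℂ) + ((c*(x.1*y.2 - x.2*y.1) : ℝ) : ℂ) * Complex.I with hWr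
  set Ws : ℂ := ((-(c*(x.1*y.1 - x.2*y.2)) : ℝ) : ℂ) + ((-(c*(x.1*y.2 + x.2*y.1)) : ℝ) : ℂ) * Complex.I with hWs
  have hN : Complex.normSq Wr = Complex.normSq Ws := by
    rw [hWr, hWs, Complex.normSq_add_mul_I, Complex.normSq_add_mul_I]
    ring
  have hρc : ∀ k : ℕ, c * rhoJ n k x y
      = (c*u) - (Wr * Complex.exp (2 * π * Complex.I / n) ^ k).re := by
    intro k
    rw [hWr, aux_mul_exp_re, aux_rho_formula, hu]
    ring
  have hσc : ∀ k : ℕ, c * sigmaJ n k x y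
      = (c*u) - (Ws * Complex.exp (2 * π * Complex.I / n) ^ k).re := by
    intro k
    rw [hWs, aux_mul_exp_re, aux_sigma_formula, hu]
    ring
  have hρ0 : ∏ k ∈ Finset.range n, (c * rhoJ n k x y) = 0 := by
    apply Finset.prod_eq_zero (Finset.mem_range.mpr hn')
    have : rhoJ n ((0:ℕ):ℤ) x y = 0 := by
      rw [aux_rho_formula]
      norm_num
    rw [this, mul_zero]
  have Hprod : ∀ t : ℝ, ∏ k ∈ Finset.range n, (t + c * sigmaJ n k x y)
      = (∏ k ∈ Finset.range n, (t + c * rhoJ n k x y))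
        + ∏ k ∈ Finset.range n, (c * sigmaJ n k x y) := by
    intro t
    have d1 := aux_prod_diff hn' (t + c*u) Wr Ws hN
    have d0 := aux_prod_diff hn' (c*u) Wr Ws hN
    have r1 : ∏ k ∈ Finset.range n, (t + c * sigmaJ n k x y)
        = ∏ k ∈ Finset.range n, ((t + c*u) - (Ws * Complex.exp (2 * π * Complex.I / n) ^ k).re) :=
      Finset.prod_congr rfl fun k _ => by rw [hσc k]; ring
    have r2 : ∏ k ∈ Finset.range n, (t + c * rhoJ n k x y)
        = ∏ k ∈ Finset.range n, ((t + c*u) - (Wr * Complex.exp (2 * π * Complex.I / n) ^ k).re) :=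
      Finset.prod_congr rfl fun k _ => by rw [hρc k]; ring
    have r3 : ∏ k ∈ Finset.range n, (c * sigmaJ n k x y)
        = ∏ k ∈ Finset.range n, ((c*u) - (Ws * Complex.exp (2 * π * Complex.I / n) ^ k).re) :=
      Finset.prod_congr rfl fun k _ => hσc k
    have r4 : ∏ k ∈ Finset.range n, (c * rhoJ n k x y)
        = ∏ k ∈ Finset.range n, ((c*u) - (Wr * Complex.exp (2 * π * Complex.I / n) ^ k).re) :=
      Finset.prod_congr rfl fun k _ => hρc k
    rw [r1, r2, r3]
    rw [r4] at hρ0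
    linarith
  have H1 : ∏ k ∈ Finset.range n, (1 + c * sigmaJ n k x y)
      = (∏ k ∈ Finset.range n, (1 + c * rhoJ n k x y))
        + ∏ k ∈ Finset.range n, (c * sigmaJ n k x y) := Hprod 1
  -- derivative identity via analysis
  have hd1 : ∀ k ∈ Finset.range n, HasDerivAt (fun t : ℝ => t + c * sigmaJ n k x y) 1 1 :=
    fun k _ => (hasDerivAt_id 1).add_const _
  have hd2 : ∀ k ∈ Finset.range n, HasDerivAt (fun t : ℝ => t + c * rhoJ n k x y) 1 1 :=
    fun k _ => (hasDerivAt_id 1).add_const _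
  have hF : HasDerivAt (fun t : ℝ => ∏ k ∈ Finset.range n, (t + c * sigmaJ n k x y))
      (∑ k ∈ Finset.range n, ∏ l ∈ (Finset.range n).erase k, (1 + c * sigmaJ n l x y)) 1 := by
    have := HasDerivAt.fun_finsetProd (u := Finset.range n)
      (f := fun (k : ℕ) (t : ℝ) => t + c * sigmaJ n k x y) (f' := fun _ => 1) hd1
    simpa using this
  have hG : HasDerivAt (fun t : ℝ => (∏ k ∈ Finset.range n, (t + c * rhoJ n k x y))
        + ∏ k ∈ Finset.range n, (c * sigmaJ n k x y))
      (∑ k ∈ Finset.range n, ∏ l ∈ (Finset.range n).erase k, (1 + c * rhoJ n l x y)) 1 := by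
    have := (HasDerivAt.fun_finsetProd (u := Finset.range n)
      (f := fun (k : ℕ) (t : ℝ) => t + c * rhoJ n k x y) (f' := fun _ => 1) hd2).add_const
      (∏ k ∈ Finset.range n, (c * sigmaJ n k x y))
    simpa using this
  have hfun : (fun t : ℝ => ∏ k ∈ Finset.range n, (t + c * sigmaJ n k x y))
      = (fun t : ℝ => (∏ k ∈ Finset.range n, (t + c * rhoJ n k x y))
        + ∏ k ∈ Finset.range n, (c * sigmaJ n k x y)) := funext Hprod
  rw [hfun] at hF
  have hSsum := hF.unique hG
  have eprod : ∀ f : ℕ → ℝ, (∀ k ∈ Finset.range n, f k ≠ 0) →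
      (∏ k ∈ Finset.range n, f k) * (∑ k ∈ Finset.range n, 1 / f k)
        = ∑ k ∈ Finset.range n, ∏ l ∈ (Finset.range n).erase k, f l := by
    intro f hf
    rw [Finset.mul_sum]
    refine Finset.sum_congr rfl fun k hk => ?_
    rw [← Finset.mul_prod_erase (Finset.range n) f hk]
    field_simp [hf k hk]
  have H2 : (∏ k ∈ Finset.range n, (1 + c * sigmaJ n k x y))
        * (∑ k ∈ Finset.range n, 1 / (1 + c * sigmaJ n k x y))
      = (∏ k ∈ Finset.range n, (1 + c * rhoJ n k x y))
        * (∑ k ∈ Finset.range n, 1 / (1 + c * rhoJ n k x y)) := by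
    rw [eprod _ (fun k hk => (hS k hk).ne'), eprod _ (fun k hk => (hR k hk).ne')]
    exact hSsum
  -- abbreviations
  set DR := ∏ k ∈ Finset.range n, (1 + c * rhoJ n k x y) with hDRdef
  set DS := ∏ k ∈ Finset.range n, (1 + c * sigmaJ n k x y) with hDSdef
  set ER := ∑ k ∈ Finset.range n, 1 / (1 + c * rhoJ n k x y) with hERdef
  set ES := ∑ k ∈ Finset.range n, 1 / (1 + c * sigmaJ n k x y) with hESdef
  set P := ∏ k ∈ Finset.range n, (c * sigmaJ n k x y) with hPdef
  have hPc : c ^ n * (∏ k ∈ Finset.range n, sigmaJ n k x y) = P := by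
    rw [hPdef, Finset.prod_mul_distrib, Finset.prod_const, Finset.card_range]
  have hsS : ∑ k ∈ Finset.range n, c * sigmaJ n k x y / (1 + c * sigmaJ n k x y)
      = n - ES := by
    have e : ∀ k ∈ Finset.range n, c * sigmaJ n k x y / (1 + c * sigmaJ n k x y)
        = 1 - 1 / (1 + c * sigmaJ n k x y) := by
      intro k hk
      field_simp [(hS k hk).ne']
      ring
    rw [Finset.sum_congr rfl e, Finset.sum_sub_distrib, Finset.sum_const, Finset.card_range,
      nsmul_eq_mul, mul_one, hESdef]
  have hsR : ∑ k ∈ Finset.range n, c * rhoJ n k x y / (1 + c * rhoJ n k x y)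
      = n - ER := by
    have e : ∀ k ∈ Finset.range n, c * rhoJ n k x y / (1 + c * rhoJ n k x y)
        = 1 - 1 / (1 + c * rhoJ n k x y) := by
      intro k hk
      field_simp [(hR k hk).ne']
      ring
    rw [Finset.sum_congr rfl e, Finset.sum_sub_distrib, Finset.sum_const, Finset.card_range,
      nsmul_eq_mul, mul_one, hERdef]
  have key : ER - ES = P / DS * ER := by
    rw [div_mul_eq_mul_div, eq_div_iff hDS.ne']
    linear_combination ER * H1 - H2
  refine ⟨?_, ?_, ?_, ?_⟩
  · rw [Finset.sum_erase_eq_sub (Finset.mem_range.mpr hj), hsS, hsR, hPc]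
    linarith [key]
  · rw [hPc]
    have hES2 : ES = DR * ER / DS := by
      rw [eq_div_iff hDS.ne']
      linear_combination H2
    have hDRP : DR + P ≠ 0 := by rw [← H1]; exact hDS.ne'
    rw [hES2, H1]
    field_simp
    ring
  · have h0 : (0:ℕ) ∈ Finset.range n := Finset.mem_range.mpr hn'
    have hterm : (1:ℝ) = 1 / (1 + c * rhoJ n ((0:ℕ):ℤ) x y) := by
      have : rhoJ n ((0:ℕ):ℤ) x y = 0 := by
        rw [aux_rho_formula]
        norm_num
      rw [this]
      norm_num
    calc (1:ℝ) = 1 / (1 + c * rhoJ n ((0:ℕ):ℤ) x y) := hterm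
    _ ≤ ER := by
      rw [hERdef]
      exact Finset.single_le_sum (f := fun k : ℕ => 1 / (1 + c * rhoJ n k x y))
        (fun k hk => one_div_nonneg.mpr (hR k hk).le) h0
  · rw [hERdef]
    calc ∑ k ∈ Finset.range n, 1 / (1 + c * rhoJ n k x y)
        ≤ ∑ k ∈ Finset.range n, (1:ℝ) := by
          apply Finset.sum_le_sum
          intro k hk
          rw [div_le_one (hR k hk)]
          nlinarith [hρnn k hk]
    _ = n := by simp
end
end

section
/- If 0 < c < 2/(2κ+1), then the function M(x) = max{f(x), g(x)} is nonincreasing on [0, ∞); in particular f(x) ≤ 1 and g(x) ≤ 1 for all x ≥ 0. -/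
open Real Set Filter Topology

lemma expMul_monotoneOn {u : ℝ → ℝ} {C a b : ℝ}
    (hu : ContinuousOn u (Icc a b))
    (hd : ∀ x ∈ Ioo a b, ∃ d, HasDerivAt u d x ∧ 0 ≤ C * u x + d) :
    MonotoneOn (fun x => Real.exp (C * x) * u x) (Icc a b) := by
  have hder : ∀ x ∈ Ioo a b, ∃ d, HasDerivAt (fun t => Real.exp (C * t) * u t)
      (Real.exp (C * x) * (C * 1) * u x + Real.exp (C * x) * d) x ∧ 0 ≤ C * u x + d := by
    intro x hx
    obtain ⟨d, hdx, hpos⟩ := hd x hx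
    exact ⟨d, (((hasDerivAt_id x).const_mul C).exp).mul hdx, hpos⟩
  apply monotoneOn_of_deriv_nonneg (convex_Icc a b)
  · exact ((Real.continuous_exp.comp (continuous_const.mul continuous_id)).continuousOn).mul hu
  · rw [interior_Icc]
    intro x hx
    obtain ⟨d, hdx, _⟩ := hder x hx
    exact hdx.differentiableAt.differentiableWithinAt
  · rw [interior_Icc]
    intro x hx
    obtain ⟨d, hdx, hpos⟩ := hder x hx
    rw [hdx.deriv]
    nlinarith [mul_nonneg (Real.exp_pos (C * x)).le hpos]

set_option maxHeartbeats 1000000 in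
/-- Positivity of `f` and `g` on `[0, ∞)`. -/
lemma oneDim_pos (κ y c : ℝ) (hκ : 0 < κ) (hy : 0 < y) (hc : 0 < c)
    (f g : ℝ → ℝ)
    (hfc : ContinuousOn f (Set.Ici 0)) (hgc : ContinuousOn g (Set.Ici 0))
    (hf0 : f 0 = 1) (hg0 : g 0 = 1)
    (hf : ∀ x > (0 : ℝ),
      HasDerivAt f (κ / (x * (1 + c * x * y)) * (g x - f x)) x)
    (hg : ∀ x > (0 : ℝ),
      HasDerivAt g (κ * (1 + c * x * y) / x * (f x - g x)
        + y * ((2 * κ + 1) * c + (κ * c - 2) * c * x * y - 2) / (1 + c * x * y) * g x) x) :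
    ∀ x ≥ (0 : ℝ), 0 < f x ∧ 0 < g x := by
  set S : Set ℝ := (Ici 0 ∩ f ⁻¹' Iic 0) ∪ (Ici 0 ∩ g ⁻¹' Iic 0) with hS
  have hmemS : ∀ x : ℝ, x ∈ S ↔ 0 ≤ x ∧ (f x ≤ 0 ∨ g x ≤ 0) := by
    intro x
    simp [hS, mem_union, mem_inter_iff, and_or_left]
  have hSclosed : IsClosed S :=
    (hfc.preimage_isClosed_of_isClosed isClosed_Ici isClosed_Iic).union
      (hgc.preimage_isClosed_of_isClosed isClosed_Ici isClosed_Iic)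
  suffices hempty : S = ∅ by
    intro x hx
    have hxS : x ∉ S := by rw [hempty]; exact notMem_empty x
    rw [hmemS] at hxS
    push_neg at hxS
    exact hxS hx
  by_contra hSne
  obtain ⟨w, hw⟩ := nonempty_iff_ne_empty.2 hSne
  have hbdd : BddBelow S := ⟨0, fun x hx => ((hmemS x).1 hx).1⟩
  set x0 := sInf S with hx0def
  have hx0S : x0 ∈ S := hSclosed.csInf_mem ⟨w, hw⟩ hbdd
  have hx0mem := (hmemS x0).1 hx0S
  have hx0pos : 0 < x0 := by
    rcases hx0mem.1.lt_or_eq with h | h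
    · exact h
    · exfalso; rcases hx0mem.2 with h2 | h2 <;> rw [← h] at h2 <;>
        [rw [hf0] at h2; rw [hg0] at h2] <;> linarith
  have hlt : ∀ x, 0 ≤ x → x < x0 → 0 < f x ∧ 0 < g x := by
    intro x hx hxlt
    by_contra hcon
    rw [not_and_or, not_lt, not_lt] at hcon
    exact absurd (csInf_le hbdd ((hmemS x).2 ⟨hx, hcon⟩)) (not_le.2 hxlt)
  clear_value x0
  have ha : 0 < x0 / 2 := by linarith
  have hab : x0 / 2 < x0 := by linarith
  set P : ℝ := κ * (1 + c * x0 * y) / (x0 / 2) with hPdef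
  set C2 : ℝ := y * ((2 * κ + 1) * c + 2 * c * x0 * y + 2) with hC2def
  set C : ℝ := P + C2 with hCdef
  have hC2 : 0 ≤ C2 := by positivity
  have hP : 0 < P := by positivity
  clear_value P C2 C
  have hsub : Icc (x0 / 2) x0 ⊆ Ici 0 := fun t ht => le_trans ha.le ht.1
  -- monotonicity of exp(Cx) f x
  have monoF : MonotoneOn (fun x => Real.exp (C * x) * f x) (Icc (x0 / 2) x0) := by
    apply expMul_monotoneOn (hfc.mono hsub)
    intro x hx
    have hxpos : 0 < x := lt_trans ha hx.1
    obtain ⟨hfx, hgx⟩ := hlt x hxpos.le hx.2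
    refine ⟨_, hf x hxpos, ?_⟩
    have hcxy : 0 ≤ c * x * y := by positivity
    have hden : 0 < x * (1 + c * x * y) := by nlinarith
    have hk_pos : 0 < κ / (x * (1 + c * x * y)) := div_pos hκ hden
    have hk_le : κ / (x * (1 + c * x * y)) ≤ C := by
      have h1 : κ / (x * (1 + c * x * y)) ≤ P := by
        rw [hPdef]
        apply div_le_div₀ (by positivity)
          (by nlinarith [mul_nonneg (mul_nonneg (mul_nonneg hκ.le hc.le) hx0pos.le) hy.le]) ha
        nlinarith [hx.1, mul_nonneg (mul_nonneg hc.le hxpos.le) hy.le]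
      linarith
    have t1 : 0 ≤ κ / (x * (1 + c * x * y)) * g x := mul_nonneg hk_pos.le hgx.le
    have t2 : 0 ≤ (C - κ / (x * (1 + c * x * y))) * f x :=
      mul_nonneg (sub_nonneg.2 hk_le) hfx.le
    nlinarith [t1, t2]
  -- monotonicity of exp(Cx) g x
  have monoG : MonotoneOn (fun x => Real.exp (C * x) * g x) (Icc (x0 / 2) x0) := by
    apply expMul_monotoneOn (hgc.mono hsub)
    intro x hx
    have hxpos : 0 < x := lt_trans ha hx.1
    obtain ⟨hfx, hgx⟩ := hlt x hxpos.le hx.2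
    refine ⟨_, hg x hxpos, ?_⟩
    set A : ℝ := (2 * κ + 1) * c + (κ * c - 2) * c * x * y - 2 with hAdef
    clear_value A
    have hcxy : 0 ≤ c * x * y := by positivity
    have hden1 : (1 : ℝ) ≤ 1 + c * x * y := by linarith
    have hq_pos : 0 < κ * (1 + c * x * y) / x := div_pos (by nlinarith) hxpos
    have hq_le : κ * (1 + c * x * y) / x ≤ P := by
      rw [hPdef]
      apply div_le_div₀ (by positivity) ?_ ha hx.1.le
      nlinarith [mul_nonneg (mul_nonneg (mul_nonneg hκ.le hc.le) hy.le) (sub_nonneg.2 hx.2.le)]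
    have hA_lb : -A ≤ (2 * κ + 1) * c + 2 * c * x0 * y + 2 := by
      rw [hAdef]
      nlinarith [mul_nonneg (mul_nonneg hκ.le hc.le) hcxy,
        mul_nonneg (mul_nonneg (mul_nonneg hc.le hy.le) hy.le) (sub_nonneg.2 hx.2.le),
        mul_nonneg (show (0:ℝ) ≤ 2 * κ + 1 by linarith) hc.le]
    have hB_lb : -C2 ≤ y * A / (1 + c * x * y) := by
      rcases le_or_gt 0 (y * A) with h | h
      · have : (0:ℝ) ≤ y * A / (1 + c * x * y) := div_nonneg h (by linarith)
        linarith
      · have h2 : -(y * A) ≤ C2 := by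
          have := mul_le_mul_of_nonneg_left hA_lb hy.le
          rw [hC2def]; nlinarith [this]
        have h3 : y * A ≤ y * A / (1 + c * x * y) := by
          rw [le_div_iff₀ (show (0:ℝ) < 1 + c * x * y by linarith)]
          nlinarith [mul_nonneg (neg_nonneg.2 h.le) hcxy]
        linarith
    have t1 : 0 ≤ κ * (1 + c * x * y) / x * f x := mul_nonneg hq_pos.le hfx.le
    have t2 : 0 ≤ (C - κ * (1 + c * x * y) / x + y * A / (1 + c * x * y)) * g x :=
      mul_nonneg (by linarith) hgx.le
    nlinarith [t1, t2]
  obtain ⟨hfa, hga⟩ := hlt (x0 / 2) ha.le hab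
  have hmemL : x0 / 2 ∈ Icc (x0 / 2) x0 := left_mem_Icc.2 hab.le
  have hmemR : x0 ∈ Icc (x0 / 2) x0 := right_mem_Icc.2 hab.le
  have hF := monoF hmemL hmemR hab.le
  have hG := monoG hmemL hmemR hab.le
  simp only at hF hG
  have hf0' : 0 < f x0 := by
    nlinarith [mul_pos (Real.exp_pos (C * (x0 / 2))) hfa, Real.exp_pos (C * x0)]
  have hg0' : 0 < g x0 := by
    nlinarith [mul_pos (Real.exp_pos (C * (x0 / 2))) hga, Real.exp_pos (C * x0)]
  rcases hx0mem.2 with h | h <;> linarith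
set_option maxHeartbeats 1000000 in
/-- One-dimensional case, upper bound: if `0 < c < 2/(2κ+1)`, then
`M(x) = max{f(x), g(x)}` is nonincreasing on `[0,∞)`; in particular `f ≤ 1` and
`g ≤ 1` on `[0,∞)`. Here `f, g` satisfy the differential system obtained from the
one-dimensional Dunkl kernel after the barrier transformation. -/
theorem oneDim_upper (κ y c : ℝ) (hκ : 0 < κ) (hy : 0 < y) (hc : 0 < c)
    (f g : ℝ → ℝ)
    (hfc : ContinuousOn f (Set.Ici 0)) (hgc : ContinuousOn g (Set.Ici 0))
    (hf0 : f 0 = 1) (hg0 : g 0 = 1)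
    (hf : ∀ x > (0 : ℝ),
      HasDerivAt f (κ / (x * (1 + c * x * y)) * (g x - f x)) x)
    (hg : ∀ x > (0 : ℝ),
      HasDerivAt g (κ * (1 + c * x * y) / x * (f x - g x)
        + y * ((2 * κ + 1) * c + (κ * c - 2) * c * x * y - 2) / (1 + c * x * y) * g x) x)
    (hc' : c < 2 / (2 * κ + 1)) :
    AntitoneOn (fun x => max (f x) (g x)) (Set.Ici 0) ∧
      ∀ x ≥ (0 : ℝ), f x ≤ 1 ∧ g x ≤ 1 := by
  have hpos := oneDim_pos κ y c hκ hy hc f g hfc hgc hf0 hg0 hf hg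
  -- the slope of the max is eventually below any positive `r`
  have hbound : ∀ x > (0:ℝ), ∀ r > (0:ℝ),
      ∀ᶠ z in 𝓝[>] x, slope (fun t => max (f t) (g t)) x z < r := by
    intro x hx r hr
    have hgx := (hpos x hx.le).2
    have hfxct : ContinuousAt f x := (hf x hx).continuousAt
    have hgxct : ContinuousAt g x := (hg x hx).continuousAt
    have hcxy : 0 ≤ c * x * y := by positivity
    have hden : (0:ℝ) < 1 + c * x * y := by linarith
    have hAneg : (2 * κ + 1) * c + (κ * c - 2) * c * x * y - 2 < 0 := by
      have h1 : c * (2 * κ + 1) < 2 := (lt_div_iff₀ (by linarith)).1 hc'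
      nlinarith [mul_nonneg (show (0:ℝ) ≤ 2 - κ * c by nlinarith) hcxy]
    have hkpos : 0 < κ / (x * (1 + c * x * y)) := div_pos hκ (by nlinarith)
    have hppos : 0 < κ * (1 + c * x * y) / x := div_pos (by nlinarith) hx
    have hBneg : y * ((2 * κ + 1) * c + (κ * c - 2) * c * x * y - 2) / (1 + c * x * y) < 0 :=
      div_neg_of_neg_of_pos (mul_neg_of_pos_of_neg hy hAneg) hden
    have hslopef : Filter.Tendsto (slope f x) (𝓝[>] x)
        (𝓝 (κ / (x * (1 + c * x * y)) * (g x - f x))) :=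
      (hasDerivAt_iff_tendsto_slope.1 (hf x hx)).mono_left
        (nhdsWithin_mono x fun z hz => ne_of_gt hz)
    have hslopeg : Filter.Tendsto (slope g x) (𝓝[>] x)
        (𝓝 (κ * (1 + c * x * y) / x * (f x - g x)
          + y * ((2 * κ + 1) * c + (κ * c - 2) * c * x * y - 2) / (1 + c * x * y) * g x)) :=
      (hasDerivAt_iff_tendsto_slope.1 (hg x hx)).mono_left
        (nhdsWithin_mono x fun z hz => ne_of_gt hz)
    rcases lt_trichotomy (f x) (g x) with hfg | hfg | hfg
    · -- g is the strict max near x and g' x < 0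
      have hDg : κ * (1 + c * x * y) / x * (f x - g x)
          + y * ((2 * κ + 1) * c + (κ * c - 2) * c * x * y - 2) / (1 + c * x * y) * g x < r := by
        have t1 := mul_neg_of_pos_of_neg hppos (by linarith : f x - g x < 0)
        have t2 := mul_neg_of_neg_of_pos hBneg hgx
        linarith
      have h1 : ∀ᶠ z in 𝓝[>] x, f z < g z :=
        (hfxct.eventually_lt hgxct hfg).filter_mono nhdsWithin_le_nhds
      have h2 : ∀ᶠ z in 𝓝[>] x, slope g x z < r :=
        hslopeg.eventually_lt tendsto_const_nhds hDg
      filter_upwards [h1, h2] with z h1z h2z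
      have e : slope (fun t => max (f t) (g t)) x z = slope g x z := by
        simp only [slope_def_field, max_eq_right h1z.le, max_eq_right hfg.le]
      exact e ▸ h2z
    · -- equal case : both one-sided slopes are eventually < r
      have hDf : κ / (x * (1 + c * x * y)) * (g x - f x) < r := by
        rw [hfg]; simpa using hr
      have hDg : κ * (1 + c * x * y) / x * (f x - g x)
          + y * ((2 * κ + 1) * c + (κ * c - 2) * c * x * y - 2) / (1 + c * x * y) * g x < r := by
        have t2 := mul_neg_of_neg_of_pos hBneg hgx
        rw [hfg]
        simp only [sub_self, mul_zero]
        linarith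
      have h2f : ∀ᶠ z in 𝓝[>] x, slope f x z < r :=
        hslopef.eventually_lt tendsto_const_nhds hDf
      have h2g : ∀ᶠ z in 𝓝[>] x, slope g x z < r :=
        hslopeg.eventually_lt tendsto_const_nhds hDg
      filter_upwards [h2f, h2g] with z hzf hzg
      rcases le_total (f z) (g z) with hz | hz
      · have e : slope (fun t => max (f t) (g t)) x z = slope g x z := by
          simp only [slope_def_field, max_eq_right hz, max_eq_right hfg.le]
        exact e ▸ hzg
      · have e : slope (fun t => max (f t) (g t)) x z = slope f x z := by
          simp only [slope_def_field, max_eq_left hz, max_eq_left hfg.ge]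
        exact e ▸ hzf
    · -- f is the strict max near x and f' x < 0
      have hDf : κ / (x * (1 + c * x * y)) * (g x - f x) < r := by
        have := mul_neg_of_pos_of_neg hkpos (by linarith : g x - f x < 0)
        linarith
      have h1 : ∀ᶠ z in 𝓝[>] x, g z < f z :=
        (hgxct.eventually_lt hfxct hfg).filter_mono nhdsWithin_le_nhds
      have h2 : ∀ᶠ z in 𝓝[>] x, slope f x z < r :=
        hslopef.eventually_lt tendsto_const_nhds hDf
      filter_upwards [h1, h2] with z h1z h2z
      have e : slope (fun t => max (f t) (g t)) x z = slope f x z := by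
        simp only [slope_def_field, max_eq_left h1z.le, max_eq_left hfg.le]
      exact e ▸ h2z
  -- fencing on `[a, b]` for `a > 0`
  have key : ∀ a, 0 < a → ∀ b, a ≤ b → max (f b) (g b) ≤ max (f a) (g a) := by
    intro a ha b hab
    have hsub : Icc a b ⊆ Ici 0 := fun t ht => le_trans ha.le ht.1
    have hcont : ContinuousOn (fun t => max (f t) (g t)) (Icc a b) := by
      have := ContinuousOn.sup (hfc.mono hsub) (hgc.mono hsub)
      simpa using this
    exact image_le_of_liminf_slope_right_le_deriv_boundary (B := fun _ => max (f a) (g a))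
      (B' := fun _ => (0:ℝ)) hcont le_rfl continuousOn_const
      (fun x _ => hasDerivWithinAt_const x _ _)
      (fun x hx r hr => (hbound x (lt_of_lt_of_le ha hx.1) r hr).frequently)
      (right_mem_Icc.2 hab)
  have hanti : AntitoneOn (fun x => max (f x) (g x)) (Set.Ici 0) := by
    intro u hu v hv huv
    rcases (show (0:ℝ) ≤ u from hu).lt_or_eq with h0u | h0u
    · exact key u h0u v huv
    · rcases (show (0:ℝ) ≤ v from hv).lt_or_eq with h0v | h0v
      · have h1 : ∀ᶠ t in 𝓝[>] (0:ℝ), max (f v) (g v) ≤ max (f t) (g t) := by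
          filter_upwards [Ioc_mem_nhdsGT_of_mem ⟨le_rfl, h0v⟩] with t ht
          exact key t ht.1 v ht.2
        have hMc : ContinuousOn (fun t => max (f t) (g t)) (Ici 0) := by
          have := ContinuousOn.sup hfc hgc
          simpa using this
        have h2 : Filter.Tendsto (fun t => max (f t) (g t)) (𝓝[>] (0:ℝ))
            (𝓝 (max (f 0) (g 0))) :=
          (hMc 0 self_mem_Ici).mono_left (nhdsWithin_mono 0 Ioi_subset_Ici_self)
        have := ge_of_tendsto h2 h1
        rw [← h0u]
        exact this
      · rw [← h0u, ← h0v]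
  refine ⟨hanti, fun x hx => ?_⟩
  have h1 : max (f x) (g x) ≤ max (f 0) (g 0) := hanti self_mem_Ici hx hx
  rw [hf0, hg0] at h1
  simp only [max_self] at h1
  exact ⟨le_trans (le_max_left _ _) h1, le_trans (le_max_right _ _) h1⟩
end

section
/- If c > 2/κ, then the function m(x) = min{f(x), g(x)} is nondecreasing on [0, ∞); in particular f(x) ≥ 1 and g(x) ≥ 1 for all x ≥ 0. -/
open Real Set

open Filter Topology

/-- One-dimensional case, lower bound: if `c > 2/κ`, then
`m(x) = min{f(x), g(x)}` is nondecreasing on `[0,∞)`; in particular `f ≥ 1` and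
`g ≥ 1` on `[0,∞)`. Here `f, g` satisfy the differential system obtained from the
one-dimensional Dunkl kernel after the barrier transformation. -/
theorem oneDim_lower (κ y c : ℝ) (hκ : 0 < κ) (hy : 0 < y) (hc : 0 < c)
    (f g : ℝ → ℝ)
    (hfc : ContinuousOn f (Set.Ici 0)) (hgc : ContinuousOn g (Set.Ici 0))
    (hf0 : f 0 = 1) (hg0 : g 0 = 1)
    (hf : ∀ x > (0 : ℝ),
      HasDerivAt f (κ / (x * (1 + c * x * y)) * (g x - f x)) x)
    (hg : ∀ x > (0 : ℝ),
      HasDerivAt g (κ * (1 + c * x * y) / x * (f x - g x)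
        + y * ((2 * κ + 1) * c + (κ * c - 2) * c * x * y - 2) / (1 + c * x * y) * g x) x)
    (hc' : 2 / κ < c) :
    MonotoneOn (fun x => min (f x) (g x)) (Set.Ici 0) ∧
      ∀ x ≥ (0 : ℝ), 1 ≤ f x ∧ 1 ≤ g x := by
  set m : ℝ → ℝ := fun x => min (f x) (g x) with hm
  set Df : ℝ → ℝ := fun x => κ / (x * (1 + c * x * y)) * (g x - f x) with hDf
  set Dg : ℝ → ℝ := fun x => κ * (1 + c * x * y) / x * (f x - g x)
      + y * ((2 * κ + 1) * c + (κ * c - 2) * c * x * y - 2) / (1 + c * x * y) * g x with hDg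
  set D : ℝ → ℝ := fun x =>
      if f x < g x then Df x else if g x < f x then Dg x else min (Df x) (Dg x) with hD
  have hκc : 2 < c * κ := (div_lt_iff₀ hκ).1 hc'
  have hden : ∀ x : ℝ, 0 ≤ x → 0 < 1 + c * x * y := by
    intro x hx
    nlinarith [mul_nonneg (mul_nonneg hc.le hx) hy.le]
  have hA : ∀ x : ℝ, 0 ≤ x → 0 < (2 * κ + 1) * c + (κ * c - 2) * c * x * y - 2 := by
    intro x hx
    have h1 : 0 ≤ c * x * y := mul_nonneg (mul_nonneg hc.le hx) hy.le
    nlinarith [mul_nonneg (sub_nonneg.2 (by nlinarith : (2:ℝ) ≤ κ * c)) h1]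
  have hmc : ContinuousOn m (Ici 0) := hfc.inf hgc
  -- slope of m bounded below by min of slopes
  have hslope : ∀ x z : ℝ, x < z → min (slope f x z) (slope g x z) ≤ slope m x z := by
    intro x z hxz
    rw [slope_def_field, slope_def_field, slope_def_field,
      min_div_div_right (by linarith : (0:ℝ) ≤ z - x)]
    apply div_le_div_of_nonneg_right ?_ (by linarith)
    have h1 : m x ≤ f x := min_le_left _ _
    have h2 : m x ≤ g x := min_le_right _ _
    rcases le_total (f z) (g z) with h | h
    · have hz : m z = f z := min_eq_left h
      have := min_le_left (f z - f x) (g z - g x)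
      linarith
    · have hz : m z = g z := min_eq_right h
      have := min_le_right (f z - f x) (g z - g x)
      linarith
  -- the Dini-type liminf bound for F = -m
  have hDini : ∀ x : ℝ, 0 < x → ∀ r : ℝ, -(D x) < r →
      ∃ᶠ z in 𝓝[>] x, slope (fun t => -(m t)) x z < r := by
    intro x hx r hr
    have hfd := hf x hx
    have hgd := hg x hx
    have hIoi : Ioi x ⊆ {x}ᶜ := fun z hz => ne_of_gt hz
    have hsf : Tendsto (slope f x) (𝓝[>] x) (𝓝 (Df x)) :=
      (hasDerivAt_iff_tendsto_slope.mp hfd).mono_left (nhdsWithin_mono _ hIoi)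
    have hsg : Tendsto (slope g x) (𝓝[>] x) (𝓝 (Dg x)) :=
      (hasDerivAt_iff_tendsto_slope.mp hgd).mono_left (nhdsWithin_mono _ hIoi)
    have hsF : ∀ z : ℝ, slope (fun t => -(m t)) x z = -(slope m x z) := by
      intro z
      rw [slope_def_field, slope_def_field]
      ring
    apply Filter.Eventually.frequently
    by_cases h1 : f x < g x
    · -- locally m = f
      have hDx : D x = Df x := if_pos h1
      have hev : ∀ᶠ z in 𝓝 x, f z < g z :=
        hfd.continuousAt.eventually_lt hgd.continuousAt h1
      have hev' : ∀ᶠ z in 𝓝[>] x, f z < g z := nhdsWithin_le_nhds hev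
      have htend : Tendsto (fun z => -(slope f x z)) (𝓝[>] x) (𝓝 (-(Df x))) := hsf.neg
      have hlt : ∀ᶠ z in 𝓝[>] x, -(slope f x z) < r :=
        htend.eventually_lt_const (by rw [← hDx]; exact hr)
      filter_upwards [hev', hlt] with z hz1 hz2
      rw [hsF]
      have hmz : m z = f z := min_eq_left hz1.le
      have hmx : m x = f x := min_eq_left h1.le
      rw [slope_def_field, hmz, hmx, ← slope_def_field]
      exact hz2
    · by_cases h2 : g x < f x
      · have hDx : D x = Dg x := by rw [hD]; simp only [if_neg h1, if_pos h2]
        have hev : ∀ᶠ z in 𝓝 x, g z < f z :=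
          hgd.continuousAt.eventually_lt hfd.continuousAt h2
        have hev' : ∀ᶠ z in 𝓝[>] x, g z < f z := nhdsWithin_le_nhds hev
        have htend : Tendsto (fun z => -(slope g x z)) (𝓝[>] x) (𝓝 (-(Dg x))) := hsg.neg
        have hlt : ∀ᶠ z in 𝓝[>] x, -(slope g x z) < r :=
          htend.eventually_lt_const (by rw [← hDx]; exact hr)
        filter_upwards [hev', hlt] with z hz1 hz2
        rw [hsF]
        have hmz : m z = g z := min_eq_right hz1.le
        have hmx : m x = g x := min_eq_right h2.le
        rw [slope_def_field, hmz, hmx, ← slope_def_field]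
        exact hz2
      · -- f x = g x
        have hDx : D x = min (Df x) (Dg x) := by rw [hD]; simp only [if_neg h1, if_neg h2]
        have htend : Tendsto (fun z => -(min (slope f x z) (slope g x z))) (𝓝[>] x)
            (𝓝 (-(min (Df x) (Dg x)))) := (hsf.min hsg).neg
        have hlt : ∀ᶠ z in 𝓝[>] x, -(min (slope f x z) (slope g x z)) < r :=
          htend.eventually_lt_const (by rw [← hDx]; exact hr)
        filter_upwards [hlt, eventually_mem_nhdsWithin] with z hz1 hz2
        rw [hsF]
        have := hslope x z hz2
        linarith
  -- key comparison: from a point with positive minimum, m does not decrease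
  have star : ∀ a b : ℝ, 0 < a → a ≤ b → 0 < m a → m a ≤ m b := by
    intro a b ha hab hma
    rcases eq_or_lt_of_le hab with rfl | hab
    · exact le_refl _
    have key : ∀ ε : ℝ, 0 < ε → ε * (b - a) < m a → m a - ε * (b - a) ≤ m b := by
      intro ε hε hεa
      have hIcc : Icc a b ⊆ Ici 0 := fun t ht => le_trans ha.le ht.1
      have hcomp : ∀ ⦃x⦄, x ∈ Icc a b → -(m x) ≤ -(m a) + ε * (x - a) := by
        apply image_le_of_liminf_slope_right_lt_deriv_boundary'
          (f := fun t => -(m t)) (f' := fun x => -(D x))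
          (B := fun t => -(m a) + ε * (t - a)) (B' := fun _ => ε)
        · exact ((hmc.mono hIcc)).neg
        · intro x hx r hr
          exact hDini x (lt_of_lt_of_le ha hx.1) r hr
        · simp
        · exact continuousOn_const.add (continuousOn_const.mul
            (continuousOn_id.sub continuousOn_const))
        · intro x _
          have : HasDerivAt (fun t => -(m a) + ε * (t - a)) (ε * 1) x :=
            (((hasDerivAt_id x).sub_const a).const_mul ε).const_add (-(m a))
          simpa using this.hasDerivWithinAt
        · intro x hx hxB
          have hx0 : 0 < x := lt_of_lt_of_le ha hx.1
          have hmx : m x = m a - ε * (x - a) := by linarith [hxB]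
          have hmxpos : 0 < m x := by
            have h1 : ε * (x - a) ≤ ε * (b - a) :=
              mul_le_mul_of_nonneg_left (by linarith [hx.2]) hε.le
            linarith
          have hfx : 0 < f x := lt_of_lt_of_le hmxpos (min_le_left _ _)
          have hgx : 0 < g x := lt_of_lt_of_le hmxpos (min_le_right _ _)
          have hd := hden x hx0.le
          have hAx := hA x hx0.le
          have hDnn : 0 ≤ D x := by
            simp only [hD]
            by_cases h1 : f x < g x
            · rw [if_pos h1]
              exact (mul_pos (div_pos hκ (mul_pos hx0 hd)) (sub_pos.2 h1)).le
            · by_cases h2 : g x < f x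
              · rw [if_neg h1, if_pos h2]
                have t1 : 0 < κ * (1 + c * x * y) / x * (f x - g x) :=
                  mul_pos (div_pos (mul_pos hκ hd) hx0) (sub_pos.2 h2)
                have t2 : 0 < y * ((2 * κ + 1) * c + (κ * c - 2) * c * x * y - 2)
                    / (1 + c * x * y) * g x :=
                  mul_pos (div_pos (mul_pos hy hAx) hd) hgx
                simp only [hDg]
                linarith
              · rw [if_neg h1, if_neg h2]
                have hfg : f x = g x := le_antisymm (not_lt.1 h2) (not_lt.1 h1)
                have hDf0 : Df x = 0 := by simp [hDf, hfg]
                have hDg0 : 0 < Dg x := by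
                  have t2 : 0 < y * ((2 * κ + 1) * c + (κ * c - 2) * c * x * y - 2)
                      / (1 + c * x * y) * g x :=
                    mul_pos (div_pos (mul_pos hy hAx) hd) hgx
                  simp only [hDg, hfg]
                  simpa using t2
                rw [hDf0]
                exact le_min le_rfl hDg0.le
          linarith
      have := hcomp (right_mem_Icc.2 hab.le)
      linarith
    by_contra hcon
    push_neg at hcon
    set δ := m a - m b with hδ
    have hδpos : 0 < δ := by simp [hδ]; linarith
    have hba : 0 < b - a := by linarith
    set ε := min (m a) δ / (2 * (b - a)) with hε
    have hεpos : 0 < ε := div_pos (lt_min hma hδpos) (by linarith)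
    have hεb : ε * (b - a) = min (m a) δ / 2 := by
      rw [hε]; field_simp
    have h1 : ε * (b - a) < m a := by
      rw [hεb]
      have := min_le_left (m a) δ
      linarith [lt_min hma hδpos]
    have h2 := key ε hεpos h1
    have h3 : ε * (b - a) < δ := by
      rw [hεb]
      have := min_le_right (m a) δ
      linarith [lt_min hma hδpos]
    simp only [hδ] at h3
    linarith
  -- m tends to 1 at 0 from the right
  have hm0 : m 0 = 1 := by simp [hm, hf0, hg0]
  have htend : Tendsto m (𝓝[>] 0) (𝓝 1) := by
    have := (hmc 0 (self_mem_Ici)).tendsto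
    rw [hm0] at this
    exact this.mono_left (nhdsWithin_mono _ (fun z hz => Set.mem_Ici.2 (le_of_lt (Set.mem_Ioi.1 hz))))
  have hhalf : ∀ᶠ t in 𝓝[>] (0:ℝ), (1:ℝ)/2 < m t :=
    htend.eventually (eventually_gt_nhds (by norm_num))
  have hpos : ∀ a : ℝ, 0 < a → 0 < m a := by
    intro a ha
    obtain ⟨t, ht1, ht2⟩ :=
      (hhalf.and (eventually_of_mem (Ioc_mem_nhdsGT ha) (fun z hz => hz))).exists
    have := star t a ht2.1 ht2.2 (by linarith)
    linarith
  have hone : ∀ x : ℝ, 0 < x → 1 ≤ m x := by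
    intro x hx
    have hev : ∀ᶠ t in 𝓝[>] (0:ℝ), m t ≤ m x := by
      filter_upwards [hhalf,
        eventually_of_mem (Ioc_mem_nhdsGT hx) (fun z hz => hz)] with t ht1 ht2
      exact star t x ht2.1 ht2.2 (by linarith)
    exact le_of_tendsto htend hev
  constructor
  · intro u hu v hv huv
    rcases (Set.mem_Ici.1 hu).eq_or_lt with h | h
    · rcases (Set.mem_Ici.1 hv).eq_or_lt with h' | h'
      · show m u ≤ m v
        rw [← h, ← h']
      · show m u ≤ m v
        rw [← h, hm0]
        exact hone v h'
    · exact star u v h huv (hpos u h)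
  · intro x hx
    rcases hx.eq_or_lt with h | h
    · rw [← h]
      simp [hf0, hg0]
    · have h1 := hone x h
      exact ⟨h1.trans (min_le_left _ _), h1.trans (min_le_right _ _)⟩
end
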